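/- arXiv:1901.08240 — 7 statements merged into one kernel-verified Lean document; each statement's English description precedes it below -/
import Mathlib

section
/- For a path graph P_n on n vertices, the strong conflict-free connection number equals ⌈log₂ n⌉. -/
open SimpleGraph

/-- An edge-coloring `c` makes `G` strongly conflict-free connected if every pair of
distinct vertices is joined by a shortest path on which some color appears exactly once. -/
def IsStrongCFCColoring {V : Type*} (G : SimpleGraph V) (c : Sym2 V → ℕ) : Prop :=
  ∀ u v : V, u ≠ v → ∃ p : G.Walk u v, p.IsPath ∧ p.length = G.dist u v ∧
    ∃ a : ℕ, (p.edges.map c).count a = 1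

/-- The strong conflict-free connection number: the least number of colors needed. -/
noncomputable def scfc {V : Type*} (G : SimpleGraph V) : ℕ :=
  sInf {k | ∃ c : Sym2 V → ℕ, (∀ e ∈ G.edgeSet, c e < k) ∧ IsStrongCFCColoring G c}

/-! ### 2-adic valuation facts -/

private def v2 (k : ℕ) : ℕ := padicValNat 2 k

private lemma v2_pow_dvd {k : ℕ} : 2 ^ v2 k ∣ k := pow_padicValNat_dvd

private lemma v2_le_iff {k t : ℕ} (hk : k ≠ 0) : 2 ^ t ∣ k ↔ t ≤ v2 k :=
  padicValNat_dvd_iff_le hk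

private lemma v2_pow_le {k : ℕ} (hk : k ≠ 0) : 2 ^ v2 k ≤ k :=
  Nat.le_of_dvd (Nat.pos_of_ne_zero hk) v2_pow_dvd

private lemma v2_between {k1 k2 : ℕ} (h1 : k1 ≠ 0) (hlt : k1 < k2) (he : v2 k1 = v2 k2) :
    ∃ m, k1 < m ∧ m ≤ k2 ∧ v2 k1 < v2 m := by
  set t := v2 k1 with ht
  refine ⟨k1 + 2 ^ t, by have := Nat.two_pow_pos t; omega, ?_, ?_⟩
  · have d1 : 2 ^ t ∣ k1 := v2_pow_dvd
    have d2 : 2 ^ t ∣ k2 := he ▸ v2_pow_dvd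
    have hd : 2 ^ t ∣ k2 - k1 := Nat.dvd_sub d2 d1
    have : 2 ^ t ≤ k2 - k1 := Nat.le_of_dvd (by omega) hd
    omega
  · have hm : k1 + 2 ^ t ≠ 0 := by positivity
    rw [show t < v2 (k1 + 2^t) ↔ t + 1 ≤ v2 (k1 + 2^t) from Iff.rfl, ← v2_le_iff hm]
    obtain ⟨q, hq⟩ := v2_pow_dvd (k := k1)
    have hqodd : ¬ 2 ∣ q := by
      intro ⟨r, hr⟩
      have : 2 ^ (t + 1) ∣ k1 := ⟨r, by rw [hq, hr]; ring⟩
      rw [v2_le_iff h1] at this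
      omega
    have heq : k1 + 2 ^ t = 2 ^ t * (q + 1) := by rw [hq]; ring
    rw [heq, pow_succ]
    exact Nat.mul_dvd_mul_left _ (by omega)

/-! ### Counting lemmas -/

private lemma countP_eq_one {α} (l : List α) (p : α → Bool) (hl : l.Nodup) (a : α) (ha : a ∈ l)
    (hpa : p a) (hu : ∀ b ∈ l, p b → b = a) : l.countP p = 1 := by
  rw [List.countP_eq_length_filter]
  have hmem : a ∈ l.filter p := List.mem_filter.2 ⟨ha, hpa⟩
  have hall : ∀ b ∈ l.filter p, b = a := fun b hb =>
    hu b (List.mem_filter.1 hb).1 (List.mem_filter.1 hb).2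
  have hrep := List.eq_replicate_of_mem hall
  have hnd : (l.filter p).Nodup := hl.filter p
  rw [hrep] at hnd hmem
  rcases Nat.lt_or_ge (l.filter p).length 2 with h | h
  · have : (l.filter p).length ≠ 0 := by
      intro h0; rw [List.length_eq_zero_iff] at h0
      rw [hrep, h0] at hmem; simp at hmem
    omega
  · exfalso
    rw [List.nodup_replicate] at hnd
    omega

private lemma exists_count_one_v2 (s len : ℕ) (hs : 1 ≤ s) (hlen : 0 < len) :
    ∃ x, ((List.range' s len).map v2).count x = 1 := by
  classical
  set T : Finset ℕ := (Finset.Ico s (s + len)).image v2 with hT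
  have hne : T.Nonempty := ⟨v2 s, Finset.mem_image.2 ⟨s, by simp [Finset.mem_Ico]; omega, rfl⟩⟩
  set x := T.max' hne with hx
  obtain ⟨k, hk, hvk⟩ := Finset.mem_image.1 (T.max'_mem hne)
  rw [Finset.mem_Ico] at hk
  refine ⟨x, ?_⟩
  have key : ∀ b, s ≤ b → b < s + len → v2 b = x → b = k := by
    intro b hb1 hb2 hvb
    by_contra hbk
    rcases Nat.lt_or_ge b k with h | h
    · obtain ⟨m, hm1, hm2, hm3⟩ := v2_between (by omega) h (by rw [hvb, hvk])
      have hmT : v2 m ∈ T := Finset.mem_image.2 ⟨m, Finset.mem_Ico.2 ⟨by omega, by omega⟩, rfl⟩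
      have := Finset.le_max' T _ hmT
      omega
    · have h' : k < b := by omega
      obtain ⟨m, hm1, hm2, hm3⟩ := v2_between (by omega) h' (by rw [hvb, hvk])
      have hmT : v2 m ∈ T := Finset.mem_image.2 ⟨m, Finset.mem_Ico.2 ⟨by omega, by omega⟩, rfl⟩
      have := Finset.le_max' T _ hmT
      omega
  rw [List.count_eq_countP, List.countP_map]
  refine countP_eq_one _ _ (List.nodup_range' ..) k (List.mem_range'_1.2 ⟨hk.1, hk.2⟩) ?_ ?_
  · simp [Function.comp, hvk, hx]
  · intro b hb hpb
    rw [List.mem_range'_1] at hb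
    simp only [Function.comp, beq_iff_eq] at hpb
    exact key b hb.1 hb.2 hpb

private lemma two_le_countP {α} (l : List α) (p : α → Bool) (a b : α) (ha : a ∈ l) (hb : b ∈ l)
    (hab : a ≠ b) (hpa : p a) (hpb : p b) : 2 ≤ l.countP p := by
  rw [List.countP_eq_length_filter]
  have ha' : a ∈ l.filter p := List.mem_filter.2 ⟨ha, hpa⟩
  have hb' : b ∈ l.filter p := List.mem_filter.2 ⟨hb, hpb⟩
  rcases hfl : l.filter p with _ | ⟨c, _ | ⟨d, t⟩⟩
  · rw [hfl] at ha'; simp at ha'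
  · rw [hfl] at ha' hb'; simp at ha' hb'; exact absurd (ha'.trans hb'.symm) hab
  · simp [hfl]

private lemma count_one_unique_pos (g : ℕ → ℕ) (s len x : ℕ)
    (h : ((List.range' s len).map g).count x = 1) :
    ∃ p, s ≤ p ∧ p < s + len ∧ g p = x ∧ ∀ q, s ≤ q → q < s + len → g q = x → q = p := by
  rw [List.count_eq_countP, List.countP_map] at h
  have hx : ∃ p ∈ List.range' s len, ((· == x) ∘ g) p = true := by
    rw [← List.countP_pos_iff]; omega
  obtain ⟨p, hp, hpx⟩ := hx
  simp only [Function.comp, beq_iff_eq] at hpx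
  rw [List.mem_range'_1] at hp
  refine ⟨p, hp.1, hp.2, hpx, ?_⟩
  intro q hq1 hq2 hq3
  by_contra hqp
  have := two_le_countP (List.range' s len) ((· == x) ∘ g) q p
    (List.mem_range'_1.2 ⟨hq1, hq2⟩) (List.mem_range'_1.2 ⟨hp.1, hp.2⟩) hqp
    (by simp [Function.comp, hq3]) (by simp [Function.comp, hpx])
  omega

private lemma interval_cf_bound : ∀ (j : ℕ) (S : Finset ℕ) (g : ℕ → ℕ) (a m : ℕ),
    S.card ≤ j →
    (∀ i, a ≤ i → i < a + m → g i ∈ S) →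
    (∀ s len, 0 < len → a ≤ s → s + len ≤ a + m →
      ∃ x, ((List.range' s len).map g).count x = 1) →
    m + 1 ≤ 2 ^ j := by
  intro j
  induction j with
  | zero =>
    intro S g a m hcard hmem hcf
    rcases Nat.eq_zero_or_pos m with h | h
    · simp [h]
    · obtain ⟨x, hx⟩ := hcf a m h le_rfl le_rfl
      obtain ⟨p, hp1, hp2, hp3, _⟩ := count_one_unique_pos g a m x hx
      have hgp : g p ∈ S := hmem p hp1 hp2
      have hS : S.Nonempty := ⟨g p, hgp⟩
      have := Finset.card_pos.2 hS
      omega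
  | succ j ih =>
    intro S g a m hcard hmem hcf
    rcases Nat.eq_zero_or_pos m with h | h
    · subst h
      have h1 : (1:ℕ) ≤ 2 ^ j := Nat.one_le_two_pow
      have h2 : (2:ℕ) ^ j ≤ 2 ^ (j+1) := Nat.pow_le_pow_right (by norm_num) (by omega)
      omega
    · obtain ⟨x, hx⟩ := hcf a m h le_rfl le_rfl
      obtain ⟨p, hp1, hp2, hp3, hpu⟩ := count_one_unique_pos g a m x hx
      have hxS : x ∈ S := hp3 ▸ hmem p hp1 hp2
      have hleft : p - a + 1 ≤ 2 ^ j := by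
        refine ih (S.erase x) g a (p - a) (by rw [Finset.card_erase_of_mem hxS]; omega) ?_ ?_
        · intro i hi1 hi2
          refine Finset.mem_erase.2 ⟨?_, hmem i hi1 (by omega)⟩
          intro hgi
          have := hpu i hi1 (by omega) hgi; omega
        · intro s len hlen hs hsl
          exact hcf s len hlen hs (by omega)
      have hright : (a + m - p - 1) + 1 ≤ 2 ^ j := by
        refine ih (S.erase x) g (p+1) (a + m - p - 1)
          (by rw [Finset.card_erase_of_mem hxS]; omega) ?_ ?_
        · intro i hi1 hi2
          refine Finset.mem_erase.2 ⟨?_, hmem i (by omega) (by omega)⟩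
          intro hgi
          have := hpu i (by omega) (by omega) hgi; omega
        · intro s len hlen hs hsl
          exact hcf s len hlen (by omega) (by omega)
      have hpow : (2:ℕ) ^ (j+1) = 2 ^ j + 2 ^ j := by ring
      omega

/-! ### Path graph walks and distance -/

/-- The monotone walk in the path graph from `u` up to `v`. -/
private def walkUp {n : ℕ} : (d : ℕ) → (u v : Fin n) → u.val + d = v.val →
    (pathGraph n).Walk u v
  | 0, u, v, h => (show u = v from Fin.ext (by omega)) ▸ Walk.nil
  | d+1, u, v, h =>
      Walk.cons
        (show (pathGraph n).Adj u ⟨u.val+1, by omega⟩ by rw [pathGraph_adj]; left; rfl)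
        (walkUp d ⟨u.val+1, by omega⟩ v (by simp; omega))

private lemma walkUp_length {n : ℕ} : ∀ (d : ℕ) (u v : Fin n) (h : u.val + d = v.val),
    (walkUp d u v h).length = d
  | 0, u, v, h => by
    have huv : u = v := Fin.ext (by omega)
    subst huv; rfl
  | d+1, u, v, h => by
    simp [walkUp, walkUp_length d]

private lemma walkUp_support_map {n : ℕ} : ∀ (d : ℕ) (u v : Fin n) (h : u.val + d = v.val),
    (walkUp d u v h).support.map Fin.val = List.range' u.val (d+1)
  | 0, u, v, h => by
    have huv : u = v := Fin.ext (by omega)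
    subst huv; rfl
  | d+1, u, v, h => by
    rw [List.range'_succ]
    simp only [walkUp, Walk.support_cons, List.map_cons]
    rw [walkUp_support_map d]

private lemma walkUp_isPath {n : ℕ} (d : ℕ) (u v : Fin n) (h : u.val + d = v.val) :
    (walkUp d u v h).IsPath := by
  rw [Walk.isPath_def]
  have h1 : ((walkUp d u v h).support.map Fin.val).Nodup := by
    rw [walkUp_support_map]; exact List.nodup_range' ..
  exact h1.of_map Fin.val

private lemma walk_length_ge {n : ℕ} {u v : Fin n} (p : (pathGraph n).Walk u v) :
    v.val ≤ u.val + p.length ∧ u.val ≤ v.val + p.length := by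
  induction p with
  | nil => omega
  | cons h q ih =>
    rw [pathGraph_adj] at h
    rw [Walk.length_cons]
    omega

private lemma pathGraph_dist {n : ℕ} (u v : Fin n) (h : u.val ≤ v.val) :
    (pathGraph n).dist u v = v.val - u.val := by
  have hle : (pathGraph n).dist u v ≤ v.val - u.val := by
    have := SimpleGraph.dist_le (walkUp (v.val - u.val) u v (by omega))
    rwa [walkUp_length] at this
  have hreach : (pathGraph n).Reachable u v := ⟨walkUp (v.val - u.val) u v (by omega)⟩
  obtain ⟨p, hp⟩ := hreach.exists_walk_length_eq_dist
  have := walk_length_ge p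
  omega

/-- Any walk of minimal length in the path graph is the monotone walk. -/
private lemma walk_eq_walkUp {n : ℕ} {u v : Fin n} :
    ∀ (p : (pathGraph n).Walk u v) (h : u.val + p.length = v.val),
      p = walkUp p.length u v h := by
  intro p
  induction p with
  | nil => intro h; rfl
  | @cons a w b hadj q ih =>
    intro h
    have h' : a.val + (q.length + 1) = b.val := h
    have hq := walk_length_ge q
    have hadj' := hadj
    rw [pathGraph_adj] at hadj'
    rcases hadj' with h1 | h1
    · have hb := b.isLt
      have hn' : a.val + 1 < n := by omega
      have hw : w = ⟨a.val + 1, hn'⟩ := Fin.ext (by simp; omega)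
      subst hw
      show Walk.cons hadj q = Walk.cons _ (walkUp q.length _ b _)
      exact congrArg (Walk.cons hadj) (ih (by simp; omega))
    · omega

/-! ### The valuation coloring -/

private def cV2 {n : ℕ} : Sym2 (Fin n) → ℕ :=
  Sym2.lift ⟨fun a b => v2 (max a.val b.val), fun a b => by simp [max_comm]⟩

private lemma walkUp_edges_map_cV2 {n : ℕ} : ∀ (d : ℕ) (u v : Fin n) (h : u.val + d = v.val),
    (walkUp d u v h).edges.map cV2 = (List.range' (u.val + 1) d).map v2
  | 0, u, v, h => by
    have huv : u = v := Fin.ext (by omega)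
    subst huv; rfl
  | d+1, u, v, h => by
    rw [List.range'_succ]
    simp only [walkUp, Walk.edges_cons, List.map_cons]
    rw [walkUp_edges_map_cV2 d]
    congr 1
    show v2 (max u.val (u.val+1)) = v2 (u.val + 1)
    rw [max_eq_right (by omega)]

/-- Edges of the monotone walk mapped through an arbitrary coloring. -/
private lemma walkUp_edges_map_c {n : ℕ} (c : Sym2 (Fin n) → ℕ) :
    ∀ (d : ℕ) (u v : Fin n) (h : u.val + d = v.val),
    (walkUp d u v h).edges.map c = (List.range' u.val d).map
      (fun i => if h2 : i + 1 < n then c (Sym2.mk ⟨i, by omega⟩ ⟨i+1, h2⟩) else 0)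
  | 0, u, v, h => by
    have huv : u = v := Fin.ext (by omega)
    subst huv; rfl
  | d+1, u, v, h => by
    rw [List.range'_succ]
    simp only [walkUp, Walk.edges_cons, List.map_cons]
    rw [walkUp_edges_map_c c d]
    congr 1
    have h2 : u.val + 1 < n := by omega
    rw [dif_pos h2]

theorem scfc_pathGraph (n : ℕ) (hn : 1 ≤ n) :
    scfc (SimpleGraph.pathGraph n) = Nat.clog 2 n := by
  have hmem : Nat.clog 2 n ∈
      {k | ∃ c : Sym2 (Fin n) → ℕ, (∀ e ∈ (pathGraph n).edgeSet, c e < k) ∧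
        IsStrongCFCColoring (pathGraph n) c} := by
    refine ⟨cV2, ?_, ?_⟩
    · intro e he
      induction e using Sym2.ind with
      | _ a b =>
        rw [mem_edgeSet, pathGraph_adj] at he
        have hcv : cV2 (Sym2.mk a b) = v2 (max a.val b.val) := rfl
        rw [hcv]
        set m := max a.val b.val with hm
        have hm1 : 1 ≤ m := by omega
        have hm2 : m < n := by omega
        have hp1 : 2 ^ v2 m ≤ m := v2_pow_le (by omega)
        have hp2 : n ≤ 2 ^ Nat.clog 2 n := Nat.le_pow_clog (by norm_num) n
        have : (2:ℕ) ^ v2 m < 2 ^ Nat.clog 2 n := by omega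
        exact (Nat.pow_lt_pow_iff_right (by norm_num)).1 this
    · intro u v huv
      rcases Nat.lt_or_ge u.val v.val with hlt | hge
      · set d := v.val - u.val with hd
        have hdh : u.val + d = v.val := by omega
        refine ⟨walkUp d u v hdh, walkUp_isPath d u v hdh, ?_, ?_⟩
        · rw [walkUp_length, pathGraph_dist u v (by omega)]
        · rw [walkUp_edges_map_cV2]
          exact exists_count_one_v2 (u.val + 1) d (by omega) (by omega)
      · have hlt : v.val < u.val := by
          rcases Nat.lt_or_ge v.val u.val with h | h
          · exact h
          · exact absurd (Fin.ext (by omega)) huv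
        set d := u.val - v.val with hd
        have hdh : v.val + d = u.val := by omega
        refine ⟨(walkUp d v u hdh).reverse, (walkUp_isPath d v u hdh).reverse, ?_, ?_⟩
        · rw [Walk.length_reverse, walkUp_length, SimpleGraph.dist_comm,
            pathGraph_dist v u (by omega)]
        · rw [Walk.edges_reverse, List.map_reverse]
          obtain ⟨x, hx⟩ := exists_count_one_v2 (v.val + 1) d (by omega) (by omega)
          refine ⟨x, ?_⟩
          rw [List.count_reverse, walkUp_edges_map_cV2, hx]
  have hlb : ∀ k ∈ {k | ∃ c : Sym2 (Fin n) → ℕ, (∀ e ∈ (pathGraph n).edgeSet, c e < k) ∧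
      IsStrongCFCColoring (pathGraph n) c}, Nat.clog 2 n ≤ k := by
    rintro k ⟨c, hcol, hcfc⟩
    rw [Nat.clog_le_iff_le_pow (by norm_num)]
    set g : ℕ → ℕ := fun i => if h2 : i + 1 < n then c (Sym2.mk ⟨i, by omega⟩ ⟨i+1, h2⟩) else 0
      with hg
    have hbound : n - 1 + 1 ≤ 2 ^ k := by
      refine interval_cf_bound k (Finset.range k) g 0 (n-1) (by simp) ?_ ?_
      · intro i hi1 hi2
        rw [Finset.mem_range]
        have h2 : i + 1 < n := by omega
        have hgi : g i = c (Sym2.mk ⟨i, by omega⟩ ⟨i+1, h2⟩) := dif_pos h2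
        rw [hgi]
        refine hcol _ ?_
        rw [mem_edgeSet, pathGraph_adj]
        left; rfl
      · intro s len hlen hs hsl
        set u : Fin n := ⟨s, by omega⟩ with hu
        set v : Fin n := ⟨s + len, by omega⟩ with hv
        have huv : u ≠ v := by
          intro h; rw [Fin.ext_iff] at h; simp [hu, hv] at h; omega
        obtain ⟨p, hpath, hplen, x, hx⟩ := hcfc u v huv
        rw [pathGraph_dist u v (by simp [hu, hv])] at hplen
        have hd : u.val + p.length = v.val := by simp [hu, hv] at hplen ⊢; omega
        have hpeq := walk_eq_walkUp p hd
        rw [hpeq, walkUp_edges_map_c c] at hx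
        have hlen' : p.length = len := by simp [hu, hv] at hplen; omega
        rw [hlen'] at hx
        exact ⟨x, hx⟩
    omega
  exact Nat.le_antisymm (Nat.sInf_le hmem) (le_csInf ⟨_, hmem⟩ hlb)
end

section
/- For integers 1 ≤ s ≤ t, the strong conflict-free connection number of the complete bipartite graph K_{s,t} equals ⌈t^{1/s}⌉. -/
open SimpleGraph

lemma dist_eq_two_aux {V : Type*} {G : SimpleGraph V} {u v w : V} (hne : u ≠ v)
    (hna : ¬ G.Adj u v) (h1 : G.Adj u w) (h2 : G.Adj w v) : G.dist u v = 2 := by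
  have hle := G.dist_le (Walk.cons h1 (Walk.cons h2 Walk.nil))
  simp only [Walk.length_cons, Walk.length_nil] at hle
  have hr : G.Reachable u v := ⟨Walk.cons h1 (Walk.cons h2 Walk.nil)⟩
  have h0 : G.dist u v ≠ 0 := by
    rw [Ne, hr.dist_eq_zero_iff]; exact hne
  have h1' : G.dist u v ≠ 1 := by
    rw [Ne, dist_eq_one_iff_adj]; exact hna
  omega

lemma count_pair_left {a b : ℕ} (h : a ≠ b) : ([a, b] : List ℕ).count a = 1 := by
  simp [List.count_cons, h.symm]

lemma lb_aux (s t m : ℕ) (hs : 1 ≤ s) (c : Sym2 (Fin s ⊕ Fin t) → ℕ)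
    (hc : ∀ e ∈ (completeBipartiteGraph (Fin s) (Fin t)).edgeSet, c e < m)
    (h : IsStrongCFCColoring (completeBipartiteGraph (Fin s) (Fin t)) c) : t ≤ m ^ s := by
  set G := completeBipartiteGraph (Fin s) (Fin t) with hG
  have hmem : ∀ (i : Fin s) (v : Fin t), s(Sum.inl i, Sum.inr v) ∈ G.edgeSet := by
    intro i v; simp [hG]
  set F : Fin t → (Fin s → Fin m) :=
    fun v i => ⟨c s(Sum.inl i, Sum.inr v), hc _ (hmem i v)⟩ with hFdef
  have hF : Function.Injective F := by
    intro u v huv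
    by_contra hne
    have hne' : (Sum.inr u : Fin s ⊕ Fin t) ≠ Sum.inr v := by simp [hne]
    obtain ⟨p, hp, hlen, a, ha⟩ := h _ _ hne'
    have hdist : G.dist (Sum.inr u) (Sum.inr v) = 2 := by
      refine dist_eq_two_aux hne' (by simp [hG]) (w := Sum.inl ⟨0, hs⟩) (by simp [hG]) (by simp [hG])
    rw [hdist] at hlen
    -- destructure p
    cases p with
    | nil => simp at hlen
    | cons h1 q =>
      rename_i w
      cases q with
      | nil => simp at hlen
      | cons h2 q' =>
        cases q' with
        | cons h3 q'' => simp [Walk.length_cons] at hlen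
        | nil =>
          cases w with
          | inr w' => simp [hG] at h1
          | inl i =>
            simp only [Walk.edges_cons, Walk.edges_nil, List.map_cons, List.map_nil] at ha
            have hceq : c s(Sum.inl i, Sum.inr u) = c s(Sum.inl i, Sum.inr v) := by
              have := congrFun huv i
              simpa [hFdef, Fin.ext_iff] using this
            rw [Sym2.eq_swap (a := (Sum.inr u : Fin s ⊕ Fin t))] at ha
            rw [hceq] at ha
            rcases eq_or_ne a (c s(Sum.inl i, Sum.inr v)) with h' | h'
            · simp [List.count_cons, h'] at ha
            · simp [List.count_cons, h', Ne.symm h'] at ha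
  calc t = Fintype.card (Fin t) := by simp
    _ ≤ Fintype.card (Fin s → Fin m) := Fintype.card_le_of_injective F hF
    _ = m ^ s := by simp [Fintype.card_fun]

lemma adj_pair {V : Type*} {G : SimpleGraph V} (c : Sym2 V → ℕ) {u v : V} (hadj : G.Adj u v) :
    ∃ p : G.Walk u v, p.IsPath ∧ p.length = G.dist u v ∧
      ∃ a : ℕ, (p.edges.map c).count a = 1 := by
  refine ⟨Walk.cons hadj Walk.nil, ?_, ?_, c s(u, v), ?_⟩
  · simp [Walk.isPath_def, hadj.ne]
  · simp [dist_eq_one_iff_adj.mpr hadj]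
  · simp

lemma two_path_pair {V : Type*} {G : SimpleGraph V} (c : Sym2 V → ℕ) {u v w : V}
    (hne : u ≠ v) (hna : ¬ G.Adj u v) (h1 : G.Adj u w) (h2 : G.Adj w v)
    (hcol : c s(u, w) ≠ c s(w, v)) :
    ∃ p : G.Walk u v, p.IsPath ∧ p.length = G.dist u v ∧
      ∃ a : ℕ, (p.edges.map c).count a = 1 := by
  refine ⟨Walk.cons h1 (Walk.cons h2 Walk.nil), ?_, ?_, c s(u, w), ?_⟩
  · simp [Walk.isPath_def, hne, h1.ne, h2.ne, h2.ne']
  · simp [dist_eq_two_aux hne hna h1 h2]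
  · simpa using count_pair_left hcol

theorem scfc_completeBipartiteGraph (s t : ℕ) (hs : 1 ≤ s) (hst : s ≤ t) :
    scfc (completeBipartiteGraph (Fin s) (Fin t)) = sInf {k : ℕ | t ≤ k ^ s} := by
  have ht1 : 1 ≤ t := hs.trans hst
  set G := completeBipartiteGraph (Fin s) (Fin t) with hG
  have hSne : ({k : ℕ | t ≤ k ^ s}).Nonempty := ⟨t, Nat.le_self_pow (by omega) t⟩
  set k := sInf {k : ℕ | t ≤ k ^ s} with hkdef
  have hk : t ≤ k ^ s := Nat.sInf_mem hSne
  have hk1 : 1 ≤ k := by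
    by_contra hc
    have : k = 0 := by omega
    rw [this, Nat.zero_pow (by omega)] at hk; omega
  -- upper bound: a good coloring with k colors
  have hkmem : ∃ c : Sym2 (Fin s ⊕ Fin t) → ℕ,
      (∀ e ∈ G.edgeSet, c e < k) ∧ IsStrongCFCColoring G c := by
    rcases eq_or_lt_of_le ht1 with ht1' | ht2
    · -- t = 1, hence s = 1
      have hs1 : s = 1 := by omega
      refine ⟨fun _ => 0, fun e _ => hk1, fun u v hne => ?_⟩
      have hadj : G.Adj u v := by
        subst hs1
        rcases ht1' with rfl
        rcases u with iu | iu <;> rcases v with iv | iv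
        · exact absurd (by rw [Subsingleton.elim iu iv]) hne
        · simp [hG]
        · simp [hG]
        · exact absurd (by rw [Subsingleton.elim iu iv]) hne
      exact adj_pair _ hadj
    · -- t ≥ 2, hence k ≥ 2
      have hk2 : 2 ≤ k := by
        by_contra hc
        have : k = 1 := by omega
        rw [this, one_pow] at hk; omega
      set δ : Fin s → (Fin s → Fin k) :=
        fun m i => if i = m then ⟨1, by omega⟩ else ⟨0, by omega⟩ with hδdef
      have hcard : Fintype.card (Fin s → Fin k) = k ^ s := by simp
      have hIcard : (Finset.image δ Finset.univ).card ≤ t :=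
        le_trans (Finset.card_image_le.trans (by simp)) hst
      obtain ⟨T, hIT, hTcard⟩ := Finset.exists_superset_card_eq hIcard (by rw [hcard]; exact hk)
      set e := T.equivFinOfCardEq hTcard with hedef
      set f : Fin t → (Fin s → Fin k) := fun v => (e.symm v : Fin s → Fin k) with hfdef
      have hfinj : Function.Injective f := by
        intro a b hab
        exact e.symm.injective (Subtype.ext hab)
      have hδmem : ∀ m : Fin s, ∃ v : Fin t, f v = δ m := by
        intro m
        refine ⟨e ⟨δ m, hIT (Finset.mem_image_of_mem δ (Finset.mem_univ m))⟩, ?_⟩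
        simp [hfdef]
      set c : Sym2 (Fin s ⊕ Fin t) → ℕ := Sym2.lift ⟨fun x y =>
        match x, y with
        | Sum.inl i, Sum.inr v => (f v i : ℕ)
        | Sum.inr v, Sum.inl i => (f v i : ℕ)
        | _, _ => 0,
        by intro x y; rcases x with i | v <;> rcases y with j | w <;> rfl⟩ with hcdef
      have hc1 : ∀ (i : Fin s) (v : Fin t), c s(Sum.inl i, Sum.inr v) = (f v i : ℕ) :=
        fun i v => rfl
      have hc2 : ∀ (i : Fin s) (v : Fin t), c s(Sum.inr v, Sum.inl i) = (f v i : ℕ) :=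
        fun i v => rfl
      refine ⟨c, ?_, ?_⟩
      · intro e' he'
        induction e' using Sym2.ind with
        | _ x y =>
          rw [mem_edgeSet] at he'
          rcases x with i | v <;> rcases y with j | w <;> simp [hG] at he' ⊢
          · exact (f w i).is_lt
          · exact (f v j).is_lt
      · intro u v hne
        rcases u with i | u' <;> rcases v with j | v'
        · -- inl, inl
          have hij : i ≠ j := fun h => hne (by rw [h])
          obtain ⟨w, hw⟩ := hδmem i
          have hcne : c s(Sum.inl i, Sum.inr w) ≠ c s(Sum.inr w, Sum.inl j) := by
            rw [hc1, hc2, hw]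
            show ((δ i i : Fin k) : ℕ) ≠ ((δ i j : Fin k) : ℕ)
            rw [hδdef]
            simp only [if_pos rfl, if_neg (Ne.symm hij)]
            simp
          exact two_path_pair c hne (by simp [hG]) (by simp [hG]) (by simp [hG]) hcne
        · exact adj_pair c (by simp [hG])
        · exact adj_pair c (by simp [hG])
        · -- inr, inr
          have huv : u' ≠ v' := fun h => hne (by rw [h])
          have hfne : f u' ≠ f v' := fun h => huv (hfinj h)
          obtain ⟨i, hi⟩ := Function.ne_iff.mp hfne
          have hcne : c s(Sum.inr u', Sum.inl i) ≠ c s(Sum.inl i, Sum.inr v') := by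
            rw [hc1, hc2]
            exact fun h => hi (Fin.ext h)
          exact two_path_pair c hne (by simp [hG]) (by simp [hG]) (by simp [hG]) hcne
  -- conclude
  have hscfc : scfc G = sInf {m : ℕ | ∃ c : Sym2 (Fin s ⊕ Fin t) → ℕ,
      (∀ e ∈ G.edgeSet, c e < m) ∧ IsStrongCFCColoring G c} := rfl
  apply le_antisymm
  · rw [hscfc]
    exact Nat.sInf_le hkmem
  · have hmem : scfc G ∈ {m : ℕ | ∃ c : Sym2 (Fin s ⊕ Fin t) → ℕ,
        (∀ e ∈ G.edgeSet, c e < m) ∧ IsStrongCFCColoring G c} := by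
      rw [hscfc]
      exact Nat.sInf_mem ⟨k, hkmem⟩
    obtain ⟨c, hcb, hcol⟩ := hmem
    exact Nat.sInf_le (lb_aux s t _ hs c hcb hcol)
end

section
/- For the cycle C_n on n ≥ 3 vertices, scfc(C_n) ≤ ⌈log₂ n⌉. -/
open SimpleGraph
open Fin.NatCast Fin.CommRing

/-! ### Auxiliary number theory: the ruler sequence -/

private def nu (x : ℕ) : ℕ := x.factorization 2

private lemma between_mult {x y v : ℕ} (hxy : x < y) (hx : 2^v ∣ x) (hy : 2^v ∣ y) :
    ∃ z, x ≤ z ∧ z ≤ y ∧ 2^(v+1) ∣ z := by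
  obtain ⟨s, rfl⟩ := hx
  obtain ⟨t, rfl⟩ := hy
  have hst : s < t := lt_of_mul_lt_mul_left hxy (Nat.zero_le _)
  rcases Nat.even_or_odd s with he | ho
  · exact ⟨2^v * s, le_refl _, le_of_lt hxy, by
      obtain ⟨r, rfl⟩ := he
      exact ⟨r, by ring⟩⟩
  · refine ⟨2^v * (s+1), Nat.mul_le_mul_left _ (Nat.le_succ s), Nat.mul_le_mul_left _ hst, ?_⟩
    obtain ⟨r, hr⟩ := ho
    exact ⟨r + 1, by rw [hr]; ring⟩

private lemma exists_unique_max_nu {a b : ℕ} (ha : 0 < a) (hab : a ≤ b) :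
    ∃ x, a ≤ x ∧ x ≤ b ∧ ∀ y, a ≤ y → y ≤ b → y ≠ x → nu y < nu x := by
  classical
  set P : ℕ → Prop := fun v => ∃ x, a ≤ x ∧ x ≤ b ∧ 2^v ∣ x with hP
  set v := Nat.findGreatest P b with hv
  have hP0 : P 0 := ⟨a, le_refl _, hab, one_dvd _⟩
  have hPv : P v := Nat.findGreatest_spec (Nat.zero_le b) hP0
  obtain ⟨x, hax, hxb, hdvd⟩ := hPv
  have hxpos : 0 < x := lt_of_lt_of_le ha hax
  have hnotsucc : ¬ P (v+1) := by
    intro hs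
    obtain ⟨z, haz, hzb, hzd⟩ := hs
    have hzpos : 0 < z := lt_of_lt_of_le ha haz
    have h2 : 2^(v+1) ≤ z := Nat.le_of_dvd hzpos hzd
    have hle : v + 1 ≤ b := le_trans (le_trans (Nat.lt_pow_self (n := v+1) one_lt_two).le h2) hzb
    have := Nat.le_findGreatest (P := P) hle ⟨z, haz, hzb, hzd⟩
    omega
  have hnux : nu x = v := by
    have h1 : 2 ^ nu x ∣ x := Nat.ordProj_dvd x 2
    have h2 : v ≤ nu x := (Nat.Prime.pow_dvd_iff_le_factorization Nat.prime_two hxpos.ne').mp hdvd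
    by_contra hne
    have : v + 1 ≤ nu x := by omega
    exact hnotsucc ⟨x, hax, hxb, dvd_trans (pow_dvd_pow 2 this) h1⟩
  refine ⟨x, hax, hxb, fun y hay hyb hyx => ?_⟩
  by_contra hge
  have hyv : 2 ^ v ∣ y := by
    have h1 : 2 ^ nu y ∣ y := Nat.ordProj_dvd y 2
    exact dvd_trans (pow_dvd_pow 2 (by omega)) h1
  rcases lt_or_gt_of_ne hyx with h | h
  · obtain ⟨z, h1, h2, h3⟩ := between_mult h hyv hdvd
    exact hnotsucc ⟨z, le_trans hay h1, le_trans h2 hxb, h3⟩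
  · obtain ⟨z, h1, h2, h3⟩ := between_mult h hdvd hyv
    exact hnotsucc ⟨z, le_trans hax h1, le_trans h2 hyb, h3⟩

/-! ### The coloring of positions around the cycle -/

private def gcol (n i : ℕ) : ℕ :=
  if i = 0 ∨ i = (n+1)/2 then Nat.clog 2 n - 1
  else if i < (n+1)/2 then nu i else nu (i - (n+1)/2)

private lemma two_le_T {n : ℕ} (hn : 3 ≤ n) : 2 ≤ Nat.clog 2 n := by
  have := (Nat.lt_clog_iff_pow_lt (by norm_num : 1 < 2) (x := n) (y := 1)).mpr (by omega)
  omega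

private lemma n_le_pow (n : ℕ) : n ≤ 2 ^ Nat.clog 2 n := Nat.le_pow_clog (by norm_num) n

private lemma pow_eq {n : ℕ} (hn : 3 ≤ n) : 2 ^ Nat.clog 2 n = 2 * 2 ^ (Nat.clog 2 n - 1) := by
  have h2 := two_le_T hn
  conv_lhs => rw [show Nat.clog 2 n = (Nat.clog 2 n - 1) + 1 by omega]
  rw [pow_succ]; ring

private lemma M_le {n : ℕ} (hn : 3 ≤ n) : (n+1)/2 ≤ 2 ^ (Nat.clog 2 n - 1) := by
  have h1 := n_le_pow n; have h2 := pow_eq hn; omega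

private lemma nu_le {n i : ℕ} (hn : 3 ≤ n) (h1 : 1 ≤ i) (h2 : i ≤ (n+1)/2 - 1) :
    nu i + 2 ≤ Nat.clog 2 n := by
  have hd : 2 ^ nu i ∣ i := Nat.ordProj_dvd i 2
  have hle : 2 ^ nu i ≤ i := Nat.le_of_dvd (by omega) hd
  have hM := M_le hn
  have hlt : 2 ^ nu i < 2 ^ (Nat.clog 2 n - 1) := by omega
  have h3 := (Nat.pow_lt_pow_iff_right (by norm_num : 1 < 2)).mp hlt
  have := two_le_T hn
  omega

private lemma gcol_lt {n i : ℕ} (hn : 3 ≤ n) (hi : i < n) : gcol n i < Nat.clog 2 n := by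
  have hT := two_le_T hn
  unfold gcol
  split
  · omega
  · rename_i hmark
    push_neg at hmark
    split
    · have := nu_le hn (i := i) (by omega) (by omega)
      omega
    · rename_i hge
      have := nu_le hn (i := i - (n+1)/2) (by omega) (by omega)
      omega

private lemma gcol_nonmark {n i : ℕ} (hn : 3 ≤ n) (hi : i < n) (h0 : i ≠ 0)
    (hM : i ≠ (n+1)/2) : gcol n i < Nat.clog 2 n - 1 := by
  have hT := two_le_T hn
  unfold gcol
  rw [if_neg (by omega)]
  split
  · have := nu_le hn (i := i) (by omega) (by omega); omega
  · rename_i hge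
    have := nu_le hn (i := i - (n+1)/2) (by omega) (by omega); omega

/-! ### Conflict-free property of windows -/

private lemma window_cf {n st ℓ : ℕ} (hn : 3 ≤ n) (hst : st < n) (hl1 : 1 ≤ ℓ)
    (hl : 2 * ℓ ≤ n) :
    ∃ t0, t0 < ℓ ∧ ∀ t, t < ℓ → t ≠ t0 →
      gcol n ((st + t) % n) < gcol n ((st + t0) % n) := by
  have hmod : ∀ t, t < ℓ →
      ((st + t) % n = st + t ∧ st + t < n) ∨
      ((st + t) % n = st + t - n ∧ n ≤ st + t ∧ st + t - n < n) := by
    intro t ht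
    rcases lt_or_ge (st + t) n with h | h
    · exact Or.inl ⟨Nat.mod_eq_of_lt h, h⟩
    · refine Or.inr ⟨?_, h, by omega⟩
      rw [Nat.mod_eq_sub_mod h, Nat.mod_eq_of_lt (by omega)]
  by_cases hmark : ∃ t, t < ℓ ∧ ((st + t) % n = 0 ∨ (st + t) % n = (n+1)/2)
  · obtain ⟨t0, ht0, hq⟩ := hmark
    refine ⟨t0, ht0, fun t ht hne => ?_⟩
    have e0 := hmod t0 ht0
    have e1 := hmod t ht
    have hne' : (st + t) % n ≠ 0 ∧ (st + t) % n ≠ (n+1)/2 := by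
      constructor <;> intro hc <;> omega
    have h1 : gcol n ((st + t) % n) < Nat.clog 2 n - 1 :=
      gcol_nonmark hn (Nat.mod_lt _ (by omega)) hne'.1 hne'.2
    have h2 : gcol n ((st + t0) % n) = Nat.clog 2 n - 1 := by
      unfold gcol; rw [if_pos hq]
    omega
  · push_neg at hmark
    have hnowrap : ∀ t, t < ℓ → (st + t) % n = st + t ∧ st + t < n := by
      intro t ht
      rcases hmod t ht with h | h
      · exact ⟨h.1, h.2⟩
      · exfalso
        have hw : n - st < ℓ := by omega
        have := hmark (n - st) hw
        rw [show st + (n - st) = n by omega, Nat.mod_self] at this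
        exact this.1 rfl
    have hst1 : 1 ≤ st := by
      have := hmark 0 (by omega)
      rw [(hnowrap 0 (by omega)).1] at this
      omega
    have hM : ∀ t, t < ℓ → st + t ≠ (n+1)/2 := by
      intro t ht
      have := hmark t ht
      rw [(hnowrap t ht).1] at this
      exact this.2
    rcases lt_or_ge (st + ℓ - 1) ((n+1)/2) with hasc | h'
    · obtain ⟨x, hax, hxb, hmax⟩ := exists_unique_max_nu (a := st) (b := st + ℓ - 1)
        (by omega) (by omega)
      refine ⟨x - st, by omega, fun t ht hne => ?_⟩
      rw [(hnowrap t ht).1, (hnowrap (x - st) (by omega)).1,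
        show st + (x - st) = x by omega]
      have g1 : gcol n (st + t) = nu (st + t) := by
        unfold gcol; rw [if_neg (by omega), if_pos (by omega)]
      have g2 : gcol n x = nu x := by
        unfold gcol; rw [if_neg (by omega), if_pos (by omega)]
      rw [g1, g2]
      exact hmax (st + t) (by omega) (by omega) (by omega)
    · have hdesc : (n+1)/2 < st := by
        by_contra hc
        push_neg at hc
        exact hM ((n+1)/2 - st) (by omega) (by omega)
      obtain ⟨x, hax, hxb, hmax⟩ := exists_unique_max_nu (a := st - (n+1)/2)
        (b := st + ℓ - 1 - (n+1)/2) (by omega) (by omega)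
      refine ⟨x + (n+1)/2 - st, by omega, fun t ht hne => ?_⟩
      have hb2 := (hnowrap (x + (n+1)/2 - st) (by omega)).2
      rw [(hnowrap t ht).1, (hnowrap (x + (n+1)/2 - st) (by omega)).1,
        show st + (x + (n+1)/2 - st) = x + (n+1)/2 by omega]
      have g1 : gcol n (st + t) = nu (st + t - (n+1)/2) := by
        unfold gcol; rw [if_neg (by omega), if_neg (by omega)]
      have g2 : gcol n (x + (n+1)/2) = nu x := by
        unfold gcol
        rw [if_neg (by omega), if_neg (by omega), Nat.add_sub_cancel]
      rw [g1, g2]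
      exact hmax (st + t - (n+1)/2) (by omega) (by omega) (by omega)

/-! ### Counting -/

private lemma count_map_eq_one : ∀ (l : List ℕ) (f : ℕ → ℕ) (t0 : ℕ), t0 ∈ l → l.Nodup →
    (∀ t ∈ l, t ≠ t0 → f t < f t0) → (l.map f).count (f t0) = 1 := by
  intro l f t0 h0 hnd h
  induction l with
  | nil => cases h0
  | cons a l ih =>
    rw [List.map_cons, List.count_cons]
    rcases List.mem_cons.mp h0 with rfl | ht0l
    · have hzero : (l.map f).count (f t0) = 0 := by
        rw [List.count_eq_zero]
        intro hmem
        obtain ⟨t, htl, hft⟩ := List.mem_map.mp hmem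
        have hne : t ≠ t0 := fun he => (List.nodup_cons.mp hnd).1 (he ▸ htl)
        exact absurd hft (Nat.ne_of_lt (h t (List.mem_cons_of_mem _ htl) hne))
      simp [hzero]
    · have hane : a ≠ t0 := fun he => (List.nodup_cons.mp hnd).1 (he ▸ ht0l)
      have hlt : f a < f t0 := h a List.mem_cons_self hane
      rw [ih ht0l (List.nodup_cons.mp hnd).2
        (fun t htl hne => h t (List.mem_cons_of_mem _ htl) hne)]
      simp [Nat.ne_of_lt hlt]

/-! ### Walks along the cycle -/

private lemma adj_succ {n : ℕ} [NeZero n] (hn : 3 ≤ n) (u : Fin n) :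
    (cycleGraph n).Adj u (u + 1) := by
  rw [cycleGraph_adj']
  right
  rw [add_sub_cancel_left, Fin.val_one', Nat.mod_eq_of_lt (by omega)]

private def arcWalk (n : ℕ) [NeZero n] (hn : 3 ≤ n) :
    (k : ℕ) → (u : Fin n) → (cycleGraph n).Walk u (u + (k : Fin n))
  | 0, u => SimpleGraph.Walk.nil.copy rfl (by simp)
  | (k+1), u => (SimpleGraph.Walk.cons (adj_succ hn u) (arcWalk n hn k (u+1))).copy rfl
      (by push_cast; ring)

private lemma arcWalk_length {n : ℕ} [NeZero n] (hn : 3 ≤ n) :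
    ∀ (k : ℕ) (u : Fin n), (arcWalk n hn k u).length = k := by
  intro k
  induction k with
  | zero => intro u; simp [arcWalk]
  | succ k ih => intro u; simp [arcWalk, ih]

private lemma arcWalk_support {n : ℕ} [NeZero n] (hn : 3 ≤ n) :
    ∀ (k : ℕ) (u : Fin n),
      (arcWalk n hn k u).support = List.map (fun (t : ℕ) => u + (t : Fin n))
        (List.range (k+1)) := by
  intro k
  induction k with
  | zero =>
    intro u
    rw [arcWalk, SimpleGraph.Walk.support_copy, SimpleGraph.Walk.support_nil,
      show List.range 1 = [0] from rfl, List.map_singleton, Nat.cast_zero, add_zero]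
  | succ k ih =>
    intro u
    rw [arcWalk, SimpleGraph.Walk.support_copy, SimpleGraph.Walk.support_cons, ih (u+1)]
    rw [List.range_succ_eq_map (n := k+1), List.map_cons, List.map_map, Nat.cast_zero, add_zero]
    congr 1
    apply List.map_congr_left
    intro t _
    simp only [Function.comp_apply]
    push_cast
    ring

private lemma arcWalk_edges {n : ℕ} [NeZero n] (hn : 3 ≤ n) :
    ∀ (k : ℕ) (u : Fin n),
      (arcWalk n hn k u).edges
        = List.map (fun (t : ℕ) => s(u + (t : Fin n), u + (t : Fin n) + 1))
            (List.range k) := by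
  intro k
  induction k with
  | zero => intro u; rw [arcWalk, SimpleGraph.Walk.edges_copy]; simp
  | succ k ih =>
    intro u
    rw [arcWalk, SimpleGraph.Walk.edges_copy, SimpleGraph.Walk.edges_cons, ih (u+1)]
    rw [List.range_succ_eq_map (n := k), List.map_cons, List.map_map, Nat.cast_zero, add_zero]
    congr 1
    apply List.map_congr_left
    intro t _
    simp only [Function.comp_apply]
    have h1 : u + 1 + (t : Fin n) = u + (((t+1 : ℕ)) : Fin n) := by push_cast; ring
    rw [h1]

private lemma arcWalk_isPath {n : ℕ} [NeZero n] (hn : 3 ≤ n) (k : ℕ) (hk : k < n)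
    (u : Fin n) : (arcWalk n hn k u).IsPath := by
  rw [SimpleGraph.Walk.isPath_def, arcWalk_support hn]
  apply List.Nodup.map_on _ List.nodup_range
  intro t1 h1 t2 h2 he
  rw [List.mem_range] at h1 h2
  have hv := congrArg Fin.val (add_left_cancel he)
  rw [Fin.val_natCast, Fin.val_natCast, Nat.mod_eq_of_lt (by omega),
    Nat.mod_eq_of_lt (by omega)] at hv
  exact hv

private lemma walk_length_lb {n : ℕ} [NeZero n] (hn : 3 ≤ n) :
    ∀ (u v : Fin n) (p : (cycleGraph n).Walk u v),
      min ((v - u).val) (n - (v - u).val) ≤ p.length := by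
  intro u v p
  induction p with
  | nil => simp
  | @cons a b c hadj q ih =>
    rw [SimpleGraph.Walk.length_cons]
    rw [cycleGraph_adj'] at hadj
    have key : ∀ x y z : Fin n, (z - x).val = ((z - y).val + (y - x).val) % n := by
      intro x y z
      conv_lhs => rw [show z - x = (z - y) + (y - x) by ring]
      rw [Fin.val_add]
    have h1 : (c - a).val = ((c - b).val + (b - a).val) % n := key a b c
    have h2 : (c - b).val = ((c - a).val + (a - b).val) % n := key b a c
    have hca : (c - a).val < n := Fin.is_lt _
    have hcb : (c - b).val < n := Fin.is_lt _
    rcases hadj with hab | hba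
    · rw [hab] at h2
      rcases lt_or_ge ((c-a).val + 1) n with hlt | hge
      · rw [Nat.mod_eq_of_lt hlt] at h2; omega
      · rw [show (c-a).val + 1 = n by omega, Nat.mod_self] at h2; omega
    · rw [hba] at h1
      rcases lt_or_ge ((c-b).val + 1) n with hlt | hge
      · rw [Nat.mod_eq_of_lt hlt] at h1; omega
      · rw [show (c-b).val + 1 = n by omega, Nat.mod_self] at h1; omega

/-! ### The edge coloring -/

private def ecol (n : ℕ) [NeZero n] (hn : 3 ≤ n) : Sym2 (Fin n) → ℕ :=
  Sym2.lift ⟨fun a b => if b = a + 1 then gcol n a.val else if a = b + 1 then gcol n b.val else 0,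
    by
      intro a b
      dsimp only
      by_cases h1 : b = a + 1
      · subst h1
        by_cases h2 : a = a + 1 + 1
        · exfalso
          have h5 : a + 0 = a + (1 + 1) := by rw [add_zero, ← add_assoc, ← h2]
          have h6 := add_left_cancel h5
          have h7 := congrArg Fin.val h6
          rw [Fin.val_zero, Fin.val_add, Fin.val_one'] at h7
          rw [Nat.mod_eq_of_lt (a := 1) (by omega), Nat.mod_eq_of_lt (by omega)] at h7
          omega
        · simp [h2]
      · by_cases h2 : a = b + 1
        · subst h2
          simp [h1]
        · simp [h1, h2]⟩

private lemma ecol_edge {n : ℕ} [NeZero n] (hn : 3 ≤ n) (x : Fin n) :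
    ecol n hn s(x, x + 1) = gcol n x.val := by
  unfold ecol
  rw [Sym2.lift_mk]
  dsimp only
  rw [if_pos rfl]

private lemma arcWalk_colors {n : ℕ} [NeZero n] (hn : 3 ≤ n) (k : ℕ) (w : Fin n) :
    (arcWalk n hn k w).edges.map (ecol n hn)
      = List.map (fun t => gcol n ((w.val + t) % n)) (List.range k) := by
  rw [arcWalk_edges hn, List.map_map]
  apply List.map_congr_left
  intro t _
  simp only [Function.comp_apply]
  rw [ecol_edge hn]
  congr 1
  rw [Fin.val_add, Fin.val_natCast]
  conv_rhs => rw [Nat.add_mod]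
  rw [Nat.mod_eq_of_lt w.isLt]

theorem scfc_cycleGraph_le (n : ℕ) (hn : 3 ≤ n) :
    scfc (SimpleGraph.cycleGraph n) ≤ Nat.clog 2 n := by
  haveI : NeZero n := ⟨by omega⟩
  apply Nat.sInf_le
  refine ⟨ecol n hn, ?_, ?_⟩
  · intro e he
    induction e using Sym2.ind with
    | _ a b =>
      rw [SimpleGraph.mem_edgeSet] at he
      have hT := two_le_T hn
      unfold ecol
      rw [Sym2.lift_mk]
      dsimp only
      split
      · exact gcol_lt hn a.isLt
      · split
        · exact gcol_lt hn b.isLt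
        · omega
  · intro u v huv
    set k := (v - u).val with hkdef
    have hkn : k < n := Fin.is_lt _
    have hk1 : 1 ≤ k := by
      rcases Nat.eq_zero_or_pos k with h0 | h1
      · exfalso
        apply sub_ne_zero.mpr (Ne.symm huv)
        apply Fin.ext
        rw [Fin.val_zero]; exact h0
      · exact h1
    by_cases hdir : k ≤ n - k
    · -- forward arc
      have hend : u + ((k : ℕ) : Fin n) = v := by
        rw [hkdef, Fin.cast_val_eq_self]; ring
      set W : (cycleGraph n).Walk u v := (arcWalk n hn k u).copy rfl hend with hW
      have hWlen : W.length = k := by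
        rw [hW, SimpleGraph.Walk.length_copy, arcWalk_length hn]
      have hWpath : W.IsPath := by
        rw [hW, SimpleGraph.Walk.isPath_copy]
        exact arcWalk_isPath hn k hkn u
      have hreach : (cycleGraph n).Reachable u v := ⟨W⟩
      obtain ⟨p, _, hp⟩ := hreach.exists_path_of_dist
      have hlb := walk_length_lb hn u v p
      have hub := SimpleGraph.dist_le W
      have hdist : W.length = (cycleGraph n).dist u v := by
        rw [hWlen]; omega
      obtain ⟨t0, ht0, hmax⟩ := window_cf hn (st := u.val) (ℓ := k) u.isLt hk1 (by omega)
      refine ⟨W, hWpath, hdist, gcol n ((u.val + t0) % n), ?_⟩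
      have hcol : W.edges.map (ecol n hn)
          = List.map (fun t => gcol n ((u.val + t) % n)) (List.range k) := by
        rw [hW, SimpleGraph.Walk.edges_copy, arcWalk_colors hn]
      rw [hcol]
      exact count_map_eq_one _ _ t0 (List.mem_range.mpr ht0) List.nodup_range
        (fun t htl hne => hmax t (List.mem_range.mp htl) hne)
    · -- backward arc
      push_neg at hdir
      have hend : v + ((n - k : ℕ) : Fin n) = u := by
        have hcast : ((n - k : ℕ) : Fin n) = u - v := by
          rw [Nat.cast_sub hkn.le, Fin.natCast_self, zero_sub, hkdef,
            Fin.cast_val_eq_self, neg_sub]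
        rw [hcast]; ring
      set W : (cycleGraph n).Walk u v := ((arcWalk n hn (n - k) v).copy rfl hend).reverse
        with hW
      have hWlen : W.length = n - k := by
        rw [hW, SimpleGraph.Walk.length_reverse, SimpleGraph.Walk.length_copy,
          arcWalk_length hn]
      have hWpath : W.IsPath := by
        rw [hW]
        apply SimpleGraph.Walk.IsPath.reverse
        rw [SimpleGraph.Walk.isPath_copy]
        exact arcWalk_isPath hn (n - k) (by omega) v
      have hreach : (cycleGraph n).Reachable u v := ⟨W⟩
      obtain ⟨p, _, hp⟩ := hreach.exists_path_of_dist
      have hlb := walk_length_lb hn u v p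
      have hub := SimpleGraph.dist_le W
      have hdist : W.length = (cycleGraph n).dist u v := by
        rw [hWlen]; omega
      obtain ⟨t0, ht0, hmax⟩ := window_cf hn (st := v.val) (ℓ := n - k) v.isLt
        (by omega) (by omega)
      refine ⟨W, hWpath, hdist, gcol n ((v.val + t0) % n), ?_⟩
      have hcol : W.edges.map (ecol n hn)
          = (List.map (fun t => gcol n ((v.val + t) % n)) (List.range (n - k))).reverse := by
        rw [hW, SimpleGraph.Walk.edges_reverse, List.map_reverse,
          SimpleGraph.Walk.edges_copy, arcWalk_colors hn]
      rw [hcol, (List.reverse_perm _).count_eq]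
      exact count_map_eq_one _ _ t0 (List.mem_range.mpr ht0) List.nodup_range
        (fun t htl hne => hmax t (List.mem_range.mp htl) hne)
end

section
/- For the cycle C_n on n ≥ 3 vertices, scfc(C_n) ≥ ⌈log₂ n⌉ − 1. -/
open SimpleGraph

/-- Map a natural number to `Fin n` by reduction mod `n`. -/
def cyf (n : ℕ) (h : 0 < n) (t : ℕ) : Fin n := ⟨t % n, Nat.mod_lt t h⟩

lemma cyf_congr {n : ℕ} (h : 0 < n) {x y : ℕ} (hxy : x % n = y % n) :
    cyf n h x = cyf n h y := Fin.ext hxy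

lemma step_mod {n x y : ℕ} (hn : 2 ≤ n) (hx : x < n) (hy : y < n)
    (h : ((n - y) + x) % n = 1) : x = (y + 1) % n := by
  rcases Nat.lt_or_ge ((n - y) + x) n with hlt | hge
  · rw [Nat.mod_eq_of_lt hlt] at h
    have hxy : x = 0 ∧ y = n - 1 := by omega
    obtain ⟨rfl, rfl⟩ := hxy
    rw [show n - 1 + 1 = n by omega, Nat.mod_self]
  · rw [Nat.mod_eq_sub_mod hge, Nat.mod_eq_of_lt (by omega)] at h
    rw [Nat.mod_eq_of_lt (by omega : y + 1 < n)]
    omega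

lemma adj_cases {n : ℕ} (hn : 3 ≤ n) {u w : Fin n} (h : (cycleGraph n).Adj u w) :
    w.val = (u.val + 1) % n ∨ u.val = (w.val + 1) % n := by
  rw [cycleGraph_adj'] at h
  rcases h with h | h
  · right
    rw [Fin.sub_def] at h
    exact step_mod (by omega) u.isLt w.isLt h
  · left
    rw [Fin.sub_def] at h
    exact step_mod (by omega) w.isLt u.isLt h

lemma walk_decomp {n : ℕ} (hn : 3 ≤ n) {u v : Fin n} (p : (cycleGraph n).Walk u v) :
    ∃ a b : ℕ, a + b = p.length ∧ (u.val + a) % n = (v.val + b) % n ∧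
      (b = 0 → p.edges = (List.range a).map
        (fun t => s(cyf n (by omega) (u.val + t), cyf n (by omega) (u.val + t + 1)))) := by
  induction p with
  | nil => exact ⟨0, 0, rfl, rfl, fun _ => rfl⟩
  | @cons u w v h q ih =>
    obtain ⟨a, b, hab, hmod, hedges⟩ := ih
    rcases adj_cases hn h with hw | hw
    · refine ⟨a + 1, b, by simp [Walk.length_cons]; omega, ?_, ?_⟩
      · calc (u.val + (a + 1)) % n = ((u.val + 1) % n + a) % n := by
              rw [Nat.mod_add_mod]; ring_nf
            _ = (w.val + a) % n := by rw [hw]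
            _ = (v.val + b) % n := hmod
      · intro hb
        rw [Walk.edges_cons, hedges hb, List.range_succ_eq_map, List.map_cons, List.map_map]
        congr 1
        · have h1 : cyf n (by omega) u.val = u := Fin.ext (Nat.mod_eq_of_lt u.isLt)
          have h2 : cyf n (by omega) (u.val + 1) = w := Fin.ext (by
            show (u.val + 1) % n = w.val
            omega)
          rw [show u.val + 0 = u.val from rfl, show u.val + 0 + 1 = u.val + 1 from rfl, h1, h2]
        · apply List.map_congr_left
          intro t _
          simp only [Function.comp_apply]
          have e1 : cyf n (by omega : 0 < n) (w.val + t) = cyf n (by omega) (u.val + Nat.succ t) := by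
            apply cyf_congr
            conv_lhs => rw [hw]
            rw [Nat.mod_add_mod]
            congr 1
            omega
          have e2 : cyf n (by omega : 0 < n) (w.val + t + 1) = cyf n (by omega) (u.val + Nat.succ t + 1) := by
            apply cyf_congr
            conv_lhs => rw [hw]
            rw [add_assoc, Nat.mod_add_mod]
            congr 1
            omega
          rw [e1, e2]
    · refine ⟨a, b + 1, by simp [Walk.length_cons]; omega, ?_, by simp⟩
      calc (u.val + a) % n = ((w.val + 1) % n + a) % n := by rw [hw]
        _ = (w.val + a + 1) % n := by rw [Nat.mod_add_mod]; ring_nf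
        _ = ((w.val + a) % n + 1) % n := by rw [Nat.mod_add_mod]
        _ = ((v.val + b) % n + 1) % n := by rw [hmod]
        _ = (v.val + (b + 1)) % n := by rw [Nat.mod_add_mod]; ring_nf

lemma arc_adj {n : ℕ} (hn : 3 ≤ n) {i : ℕ} (h : i + 1 < n) :
    (cycleGraph n).Adj ⟨i, by omega⟩ ⟨i + 1, h⟩ := by
  rw [cycleGraph_adj']
  right
  rw [Fin.sub_def]
  show ((n - i) + (i + 1)) % n = 1
  rw [show (n - i) + (i + 1) = n + 1 by omega, Nat.add_mod_left, Nat.mod_eq_of_lt (by omega)]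

lemma arc_walk {n : ℕ} (hn : 3 ≤ n) :
    ∀ (d i : ℕ) (h : i + d < n),
      ∃ p : (cycleGraph n).Walk ⟨i, by omega⟩ ⟨i + d, h⟩, p.length = d := by
  intro d
  induction d with
  | zero => exact fun i h => ⟨Walk.nil, rfl⟩
  | succ d ih =>
    intro i h
    obtain ⟨q, hq⟩ := ih (i + 1) (by omega)
    have heq : (⟨i + 1 + d, by omega⟩ : Fin n) = ⟨i + (d + 1), h⟩ :=
      Fin.ext (by show i + 1 + d = i + (d + 1); omega)
    refine ⟨(Walk.cons (arc_adj hn (by omega)) q).copy rfl heq, ?_⟩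
    simp [hq]

lemma shortest_edges {n : ℕ} (hn : 3 ≤ n) {i j : ℕ} (hij : i < j) (hj : 2 * j < n)
    (p : (cycleGraph n).Walk ⟨i, by omega⟩ ⟨j, by omega⟩)
    (hlen : p.length = (cycleGraph n).dist (⟨i, by omega⟩ : Fin n) ⟨j, by omega⟩) :
    p.edges = (List.range (j - i)).map
      (fun t => s(cyf n (by omega) (i + t), cyf n (by omega) (i + t + 1))) := by
  obtain ⟨w, hw⟩ := arc_walk hn (j - i) i (by omega)
  have hdist : (cycleGraph n).dist (⟨i, by omega⟩ : Fin n) ⟨j, by omega⟩ ≤ j - i := by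
    have heq : (⟨i + (j - i), by omega⟩ : Fin n) = ⟨j, by omega⟩ :=
      Fin.ext (by show i + (j - i) = j; omega)
    calc (cycleGraph n).dist (⟨i, by omega⟩ : Fin n) ⟨j, by omega⟩ ≤ (w.copy rfl heq).length :=
          dist_le _
      _ = j - i := by rw [Walk.length_copy, hw]
  obtain ⟨a, b, hab, hmod, hedges⟩ := walk_decomp hn p
  have hple : p.length ≤ j - i := hlen ▸ hdist
  have hle : i + a ≤ j + b := by omega
  have hdvd : n ∣ (j + b) - (i + a) := (Nat.modEq_iff_dvd' hle).mp hmod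
  have hzero : (j + b) - (i + a) = 0 :=
    Nat.eq_zero_of_dvd_of_lt hdvd (by omega) |>.symm ▸ rfl
  have hb : b = 0 ∧ a = j - i := by omega
  rw [hedges hb.1, hb.2]

lemma count_interval (F : ℕ → ℕ) (col : ℕ) :
    ∀ d i, ((List.range d).map (fun t => F (i + t))).count col =
      ((Finset.Ico i (i + d)).filter (fun t => F t = col)).card := by
  intro d
  induction d with
  | zero => simp
  | succ d ih =>
    intro i
    rw [List.range_succ, List.map_append, List.count_append]
    have hIco : Finset.Ico i (i + (d + 1)) = insert (i + d) (Finset.Ico i (i + d)) := by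
      rw [show i + (d + 1) = (i + d) + 1 by omega,
        Nat.Ico_succ_right_eq_insert_Ico (by omega)]
    rw [hIco, Finset.filter_insert]
    by_cases hF : F (i + d) = col
    · rw [if_pos hF, Finset.card_insert_of_notMem (by simp), ih]
      simp [List.count_singleton', hF]
    · rw [if_neg hF, ih]
      simp [List.count_singleton', hF]

lemma key_lemma (F : ℕ → ℕ) :
    ∀ (k : ℕ) (S : Finset ℕ), S.card ≤ k → ∀ i j : ℕ,
      (∀ t ∈ Finset.Ico i j, F t ∈ S) →
      (∀ i' j', i ≤ i' → i' < j' → j' ≤ j →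
        ∃ col, ((Finset.Ico i' j').filter (fun t => F t = col)).card = 1) →
      j - i ≤ 2 ^ k - 1 := by
  intro k
  induction k with
  | zero =>
    intro S hS i j hmem hcf
    rcases le_or_gt j i with hij | hij
    · omega
    · obtain ⟨col, hcol⟩ := hcf i j le_rfl hij le_rfl
      obtain ⟨t, ht⟩ := Finset.card_eq_one.mp hcol
      have htm : t ∈ (Finset.Ico i j).filter (fun t => F t = col) :=
        ht ▸ Finset.mem_singleton_self t
      rw [Finset.mem_filter] at htm
      have : F t ∈ S := hmem t htm.1
      have hS0 : S = ∅ := Finset.card_eq_zero.mp (Nat.le_zero.mp hS)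
      simp [hS0] at this
  | succ k ih =>
    intro S hS i j hmem hcf
    rcases le_or_gt j i with hij | hij
    · have : (1:ℕ) ≤ 2 ^ (k+1) := Nat.one_le_two_pow
      omega
    obtain ⟨col, hcol⟩ := hcf i j le_rfl hij le_rfl
    obtain ⟨t, ht⟩ := Finset.card_eq_one.mp hcol
    have htm : t ∈ (Finset.Ico i j).filter (fun t => F t = col) :=
      ht ▸ Finset.mem_singleton_self t
    rw [Finset.mem_filter, Finset.mem_Ico] at htm
    obtain ⟨⟨hit, htj⟩, hFt⟩ := htm
    have huniq : ∀ t', i ≤ t' → t' < j → F t' = col → t' = t := by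
      intro t' h1 h2 h3
      have : t' ∈ ({t} : Finset ℕ) :=
        ht ▸ Finset.mem_filter.mpr ⟨Finset.mem_Ico.mpr ⟨h1, h2⟩, h3⟩
      simpa using this
    have hcolS : col ∈ S := hFt ▸ hmem t (Finset.mem_Ico.mpr ⟨hit, htj⟩)
    have hS' : (S.erase col).card ≤ k := by
      rw [Finset.card_erase_of_mem hcolS]; omega
    have h1 : t - i ≤ 2 ^ k - 1 := by
      apply ih (S.erase col) hS' i t
      · intro t' ht'
        rw [Finset.mem_Ico] at ht'
        refine Finset.mem_erase.mpr ⟨?_, hmem t' (Finset.mem_Ico.mpr ⟨ht'.1, by omega⟩)⟩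
        intro hc
        have := huniq t' ht'.1 (by omega) hc
        omega
      · intro i' j' h1 h2 h3
        exact hcf i' j' h1 h2 (by omega)
    have h2 : j - (t + 1) ≤ 2 ^ k - 1 := by
      apply ih (S.erase col) hS' (t + 1) j
      · intro t' ht'
        rw [Finset.mem_Ico] at ht'
        refine Finset.mem_erase.mpr ⟨?_, hmem t' (Finset.mem_Ico.mpr ⟨by omega, ht'.2⟩)⟩
        intro hc
        have := huniq t' (by omega) ht'.2 hc
        omega
      · intro i' j' h1' h2' h3'
        exact hcf i' j' (by omega) h2' h3'
    have hp : (2:ℕ) ^ (k + 1) = 2 * 2 ^ k := by ring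
    have hp1 : (1:ℕ) ≤ 2 ^ k := Nat.one_le_two_pow
    omega

lemma witness_coloring {n : ℕ} (hn : 3 ≤ n) :
    ∃ c : Sym2 (Fin n) → ℕ, (∀ e ∈ (cycleGraph n).edgeSet, c e < n * n) ∧
      IsStrongCFCColoring (cycleGraph n) c := by
  set c : Sym2 (Fin n) → ℕ := Sym2.lift ⟨fun a b => min a.val b.val + n * max a.val b.val,
    fun a b => by simp [min_comm, max_comm]⟩ with hc
  have hval : ∀ a b : Fin n, c s(a, b) = min a.val b.val + n * max a.val b.val := by
    intro a b; rw [hc]; rfl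
  refine ⟨c, ?_, ?_⟩
  · intro e _
    induction e with
    | _ a b =>
      rw [hval]
      have ha := a.isLt
      have hb := b.isLt
      have h1 : n * (max a.val b.val + 1) ≤ n * n := Nat.mul_le_mul_left n (by omega)
      have h2 : n * (max a.val b.val + 1) = n * max a.val b.val + n := by ring
      omega
  · have hinj : Function.Injective c := by
      intro e1 e2 h
      induction e1 with
      | _ a b =>
        induction e2 with
        | _ a' b' =>
          rw [hval, hval] at h
          have ha := a.isLt; have hb := b.isLt; have ha' := a'.isLt; have hb' := b'.isLt
          have hm1 : (min a.val b.val + n * max a.val b.val) % n = min a.val b.val := by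
            rw [Nat.add_mul_mod_self_left]; exact Nat.mod_eq_of_lt (by omega)
          have hm2 : (min a'.val b'.val + n * max a'.val b'.val) % n = min a'.val b'.val := by
            rw [Nat.add_mul_mod_self_left]; exact Nat.mod_eq_of_lt (by omega)
          have hmin : min a.val b.val = min a'.val b'.val := by rw [← hm1, ← hm2, h]
          rw [hmin] at h
          have hmax : max a.val b.val = max a'.val b'.val :=
            Nat.eq_of_mul_eq_mul_left (by omega) (Nat.add_left_cancel h)
          have : (a.val = a'.val ∧ b.val = b'.val) ∨ (a.val = b'.val ∧ b.val = a'.val) := by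
            omega
          rcases this with ⟨h1, h2⟩ | ⟨h1, h2⟩
          · rw [Sym2.eq_iff]; left; exact ⟨Fin.ext h1, Fin.ext h2⟩
          · rw [Sym2.eq_iff]; right; exact ⟨Fin.ext h1, Fin.ext h2⟩
    intro u v huv
    have hconn : (cycleGraph n).Connected := by
      obtain ⟨m, rfl⟩ : ∃ m, n = m + 1 := ⟨n - 1, by omega⟩
      exact cycleGraph_connected
    obtain ⟨p, hp, hlen⟩ := hconn.exists_path_of_dist u v
    have hne : p.edges ≠ [] := by
      intro h0
      have : p.length = 0 := by rw [← Walk.length_edges, h0]; rfl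
      exact huv (Walk.eq_of_length_eq_zero this)
    refine ⟨p, hp, hlen, c (p.edges.head hne), ?_⟩
    rw [List.count_map_of_injective _ _ hinj (p.edges.head hne)]
    exact List.count_eq_one_of_mem hp.isTrail.edges_nodup (List.head_mem hne)

theorem scfc_cycleGraph_ge (n : ℕ) (hn : 3 ≤ n) :
    Nat.clog 2 n - 1 ≤ scfc (SimpleGraph.cycleGraph n) := by
  have h0n : 0 < n := by omega
  have hne : {k | ∃ c : Sym2 (Fin n) → ℕ, (∀ e ∈ (cycleGraph n).edgeSet, c e < k) ∧
      IsStrongCFCColoring (cycleGraph n) c}.Nonempty := by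
    obtain ⟨c, hc1, hc2⟩ := witness_coloring hn
    exact ⟨n * n, c, hc1, hc2⟩
  have hmem := Nat.sInf_mem hne
  set K := scfc (cycleGraph n) with hK
  obtain ⟨c, hbound, hcfc⟩ := hmem
  set m := (n + 1) / 2 - 1 with hm
  set F : ℕ → ℕ := fun t => c s(cyf n h0n t, cyf n h0n (t + 1)) with hF
  have hkey : m - 0 ≤ 2 ^ K - 1 := by
    apply key_lemma F K (Finset.range K) (by simp) 0 m
    · intro t ht
      rw [Finset.mem_Ico] at ht
      rw [Finset.mem_range]
      show c s(cyf n h0n t, cyf n h0n (t + 1)) < K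
      apply hbound
      rw [mem_edgeSet]
      have e1 : cyf n h0n t = ⟨t, by omega⟩ := Fin.ext (Nat.mod_eq_of_lt (by omega))
      have e2 : cyf n h0n (t + 1) = ⟨t + 1, by omega⟩ := Fin.ext (Nat.mod_eq_of_lt (by omega))
      rw [e1, e2]
      exact arc_adj hn (by omega)
    · intro i' j' hi' hij' hj'
      have hj'n : j' < n := by omega
      have hi'n : i' < n := by omega
      have hne' : (⟨i', hi'n⟩ : Fin n) ≠ ⟨j', hj'n⟩ := by
        intro hh; rw [Fin.mk.injEq] at hh; omega
      obtain ⟨p, hp, hlen, col, hcol⟩ := hcfc ⟨i', hi'n⟩ ⟨j', hj'n⟩ hne'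
      have h2j : 2 * j' < n := by omega
      have hedges := shortest_edges hn hij' h2j p hlen
      refine ⟨col, ?_⟩
      rw [show j' = i' + (j' - i') by omega, ← count_interval F col (j' - i') i']
      rw [← hcol, hedges, List.map_map]
      rfl
  have hp1 : (1:ℕ) ≤ 2 ^ K := Nat.one_le_two_pow
  have h2 : n ≤ 2 ^ (K + 1) := by
    have hpp : (2:ℕ) ^ (K + 1) = 2 * 2 ^ K := by ring
    omega
  have := (Nat.clog_le_iff_le_pow (by norm_num)).mpr h2
  omega
end

section
/- Let G be a connected graph with m ≥ 2 edges containing t pairwise edge-disjoint triangles. Then scfc(G) ≤ m − 2t. -/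
open SimpleGraph

/-- The three edges of a triangle `(a, b, c)`. -/
def triangleEdges {V : Type*} [DecidableEq V] (T : V × V × V) : Finset (Sym2 V) :=
  {s(T.1, T.2.1), s(T.2.1, T.2.2), s(T.1, T.2.2)}


namespace CFCAux

variable {V : Type*} {G : SimpleGraph V}

lemma exists_walk_getVert {u v : V} (p : G.Walk u v) : ∀ (k : ℕ), k ≤ p.length →
    ∃ q : G.Walk u (p.getVert k), q.length = k := by
  induction p with
  | nil =>
    intro k hk
    obtain rfl : k = 0 := Nat.le_zero.mp hk
    exact ⟨Walk.nil, rfl⟩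
  | cons h q ih =>
    intro k hk
    cases k with
    | zero => exact ⟨Walk.nil, rfl⟩
    | succ n =>
      obtain ⟨q', hq'⟩ := ih n (by simpa using hk)
      exact ⟨Walk.cons h q', by simp [hq']⟩

lemma exists_walk_from_getVert {u v : V} (p : G.Walk u v) : ∀ (k : ℕ),
    ∃ q : G.Walk (p.getVert k) v, q.length = p.length - k := by
  induction p with
  | nil =>
    intro k
    exact ⟨Walk.nil.copy (by cases k <;> rfl) rfl, by simp⟩
  | cons h q ih =>
    intro k
    cases k with
    | zero => exact ⟨(Walk.cons h q).copy (Walk.getVert_zero _).symm rfl, by simp⟩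
    | succ n =>
      obtain ⟨q', hq'⟩ := ih n
      exact ⟨q', by simpa using hq'⟩

lemma dist_getVert (hc : G.Connected) {u v : V} (p : G.Walk u v)
    (hlen : p.length = G.dist u v) {k : ℕ} (hk : k ≤ p.length) :
    G.dist u (p.getVert k) = k := by
  obtain ⟨q1, hq1⟩ := exists_walk_getVert p k hk
  obtain ⟨q2, hq2⟩ := exists_walk_from_getVert p k
  have h1 : G.dist u (p.getVert k) ≤ k := le_of_le_of_eq (SimpleGraph.dist_le q1) hq1
  have h2 : G.dist (p.getVert k) v ≤ p.length - k := le_of_le_of_eq (SimpleGraph.dist_le q2) hq2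
  have h3 : G.dist u v ≤ G.dist u (p.getVert k) + G.dist (p.getVert k) v :=
    hc.dist_triangle
  omega

lemma exists_getVert_of_mem_edges {u v : V} (p : G.Walk u v) {e : Sym2 V}
    (he : e ∈ p.edges) :
    ∃ k, k < p.length ∧ e = s(p.getVert k, p.getVert (k + 1)) := by
  induction p with
  | nil => simp at he
  | cons h q ih =>
    rw [Walk.edges_cons, List.mem_cons] at he
    rcases he with he | he
    · exact ⟨0, by simp, by simpa [Walk.getVert_zero, Walk.getVert_cons_succ] using he⟩
    · obtain ⟨k, hk, hke⟩ := ih he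
      exact ⟨k + 1, by simpa using Nat.succ_lt_succ hk,
        by simpa [Walk.getVert_cons_succ] using hke⟩

/-- On a geodesic, two distinct edges sharing a vertex whose other endpoints are adjacent
cannot both occur. -/
lemma no_two_adjacent_edges (hc : G.Connected) {u v : V}
    (p : G.Walk u v) (hlen : p.length = G.dist u v)
    {x y z : V} (hyz : y ≠ z) (hadj : G.Adj y z)
    (h1 : s(x, y) ∈ p.edges) (h2 : s(x, z) ∈ p.edges) : False := by
  obtain ⟨k1, hk1, he1⟩ := exists_getVert_of_mem_edges p h1
  obtain ⟨k2, hk2, he2⟩ := exists_getVert_of_mem_edges p h2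
  rw [Sym2.eq_iff] at he1 he2
  have hy : ∃ j ≤ p.length, y = p.getVert j ∧
      ((G.dist u x = k1 ∧ j = k1 + 1) ∨ (G.dist u x = k1 + 1 ∧ j = k1)) := by
    rcases he1 with ⟨hx1, hy1⟩ | ⟨hx1, hy1⟩
    · exact ⟨k1 + 1, by omega, hy1, Or.inl ⟨hx1 ▸ dist_getVert hc p hlen (by omega), rfl⟩⟩
    · exact ⟨k1, by omega, hy1, Or.inr ⟨hx1 ▸ dist_getVert hc p hlen (by omega), rfl⟩⟩
  have hz : ∃ j ≤ p.length, z = p.getVert j ∧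
      ((G.dist u x = k2 ∧ j = k2 + 1) ∨ (G.dist u x = k2 + 1 ∧ j = k2)) := by
    rcases he2 with ⟨hx2, hz2⟩ | ⟨hx2, hz2⟩
    · exact ⟨k2 + 1, by omega, hz2, Or.inl ⟨hx2 ▸ dist_getVert hc p hlen (by omega), rfl⟩⟩
    · exact ⟨k2, by omega, hz2, Or.inr ⟨hx2 ▸ dist_getVert hc p hlen (by omega), rfl⟩⟩
  obtain ⟨jy, hjy, hyv, hycase⟩ := hy
  obtain ⟨jz, hjz, hzv, hzcase⟩ := hz
  have hdy : G.dist u y = jy := hyv ▸ dist_getVert hc p hlen hjy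
  have hdz : G.dist u z = jz := hzv ▸ dist_getVert hc p hlen hjz
  have hjyz : jy ≠ jz := by
    intro h
    exact hyz (by rw [hyv, hzv, h])
  have hdyz : G.dist y z = 1 := SimpleGraph.dist_eq_one_iff_adj.mpr hadj
  have ht1 : G.dist u z ≤ G.dist u y + G.dist y z := hc.dist_triangle
  have ht2 : G.dist u y ≤ G.dist u z + G.dist z y := hc.dist_triangle
  have hsym : G.dist z y = G.dist y z := SimpleGraph.dist_comm
  omega

end CFCAux

open CFCAux in
theorem scfc_le_of_edge_disjoint_triangles {V : Type*} [Fintype V] [DecidableEq V]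
    (G : SimpleGraph V) [DecidableRel G.Adj] (hc : G.Connected)
    (hm : 2 ≤ G.edgeFinset.card) (t : ℕ) (tri : Fin t → V × V × V)
    (htri : ∀ i, G.Adj (tri i).1 (tri i).2.1 ∧ G.Adj (tri i).2.1 (tri i).2.2 ∧
      G.Adj (tri i).1 (tri i).2.2)
    (hdisj : ∀ i j, i ≠ j → Disjoint (triangleEdges (tri i)) (triangleEdges (tri j))) :
    scfc G ≤ G.edgeFinset.card - 2 * t := by
  classical
  set m := G.edgeFinset.card with hmdef
  have hvne : ∀ i : Fin t, (tri i).1 ≠ (tri i).2.1 ∧ (tri i).2.1 ≠ (tri i).2.2 ∧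
      (tri i).1 ≠ (tri i).2.2 :=
    fun i => ⟨(htri i).1.ne, (htri i).2.1.ne, (htri i).2.2.ne⟩
  have hsub : ∀ i, triangleEdges (tri i) ⊆ G.edgeFinset := by
    intro i e he
    simp only [triangleEdges, Finset.mem_insert, Finset.mem_singleton] at he
    rcases he with rfl | rfl | rfl
    · exact SimpleGraph.mem_edgeFinset.mpr (htri i).1
    · exact SimpleGraph.mem_edgeFinset.mpr (htri i).2.1
    · exact SimpleGraph.mem_edgeFinset.mpr (htri i).2.2
  have hcard3 : ∀ i, (triangleEdges (tri i)).card = 3 := by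
    intro i
    obtain ⟨h1, h2, h3⟩ := hvne i
    set T := tri i with hT
    clear_value T
    obtain ⟨a, b, d⟩ := T
    dsimp only at h1 h2 h3
    refine Finset.card_eq_three.mpr ⟨_, _, _, ?_, ?_, ?_, rfl⟩ <;>
      · intro h
        rw [Sym2.eq_iff] at h
        tauto
  set Tr : Finset (Sym2 V) := Finset.univ.biUnion (fun i : Fin t => triangleEdges (tri i))
    with hTrdef
  have hTrcard : Tr.card = 3 * t := by
    rw [hTrdef, Finset.card_biUnion (fun i _ j _ hij => hdisj i j hij)]
    simp [hcard3, mul_comm]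
  have hTrsub : Tr ⊆ G.edgeFinset := Finset.biUnion_subset.mpr (fun i _ => hsub i)
  have h3t : 3 * t ≤ m := hTrcard ▸ Finset.card_le_card hTrsub
  set S : Finset (Sym2 V) := G.edgeFinset \ Tr with hSdef
  have hScard : S.card = m - 3 * t := by rw [hSdef, Finset.card_sdiff_of_subset hTrsub, hTrcard]
  let idx : ↥S ≃ Fin (Fintype.card ↥S) := Fintype.equivFin _
  let c : Sym2 V → ℕ := fun e =>
    if h : ∃ i, e ∈ triangleEdges (tri i) then (h.choose : ℕ)
    else if h2 : e ∈ S then t + (idx ⟨e, h2⟩ : ℕ) else 0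
  have hmemS : ∀ e ∈ G.edgeSet, (¬ ∃ i, e ∈ triangleEdges (tri i)) → e ∈ S := by
    intro e he h
    rw [hSdef, Finset.mem_sdiff]
    refine ⟨SimpleGraph.mem_edgeFinset.mpr he, ?_⟩
    rw [hTrdef]
    simp only [Finset.mem_biUnion, Finset.mem_univ, true_and]
    exact h
  have hidxlt : ∀ (e : Sym2 V) (h2 : e ∈ S), (idx ⟨e, h2⟩ : ℕ) < m - 3 * t := by
    intro e h2
    have h' := (idx ⟨e, h2⟩).isLt
    have h'' : Fintype.card ↥S = m - 3 * t := by rw [Fintype.card_coe, hScard]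
    omega
  have hbound : ∀ e ∈ G.edgeSet, c e < m - 2 * t := by
    intro e he
    by_cases h : ∃ i, e ∈ triangleEdges (tri i)
    · have hlt : (h.choose : ℕ) < t := h.choose.isLt
      simp only [c, dif_pos h]
      omega
    · have h2 := hmemS e he h
      have := hidxlt e h2
      simp only [c, dif_neg h, dif_pos h2]
      omega
  have hkey : ∀ e1 ∈ G.edgeSet, ∀ e2 ∈ G.edgeSet, e1 ≠ e2 → c e1 = c e2 →
      ∃ i, e1 ∈ triangleEdges (tri i) ∧ e2 ∈ triangleEdges (tri i) := by
    intro e1 he1 e2 he2 hne hcc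
    by_cases h1 : ∃ i, e1 ∈ triangleEdges (tri i) <;>
      by_cases h2 : ∃ i, e2 ∈ triangleEdges (tri i)
    · refine ⟨h1.choose, h1.choose_spec, ?_⟩
      have heq : h1.choose = h2.choose := by
        simp only [c, dif_pos h1, dif_pos h2] at hcc
        exact Fin.ext hcc
      rw [heq]
      exact h2.choose_spec
    · exfalso
      have hm2 := hmemS e2 he2 h2
      have hlt : (h1.choose : ℕ) < t := h1.choose.isLt
      simp only [c, dif_pos h1, dif_neg h2, dif_pos hm2] at hcc
      omega
    · exfalso
      have hm1 := hmemS e1 he1 h1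
      have hlt : (h2.choose : ℕ) < t := h2.choose.isLt
      simp only [c, dif_neg h1, dif_pos hm1, dif_pos h2] at hcc
      omega
    · exfalso
      have hm1 := hmemS e1 he1 h1
      have hm2 := hmemS e2 he2 h2
      simp only [c, dif_neg h1, dif_pos hm1, dif_neg h2, dif_pos hm2] at hcc
      have heq : idx ⟨e1, hm1⟩ = idx ⟨e2, hm2⟩ := Fin.ext (by omega)
      have := idx.injective heq
      exact hne (by simpa using congrArg Subtype.val this)
  apply Nat.sInf_le
  refine ⟨c, hbound, ?_⟩
  intro u v huv
  obtain ⟨p, hpath, hplen⟩ := hc.exists_path_of_dist u v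
  refine ⟨p, hpath, hplen, ?_⟩
  have hppos : 0 < p.length := hplen ▸ hc.pos_dist_of_ne huv
  have hene : p.edges ≠ [] := by
    have : p.edges.length = p.length := p.length_edges
    intro h
    rw [h] at this
    simp at this
    omega
  set e0 := p.edges.head hene with he0def
  have he0 : e0 ∈ p.edges := List.head_mem hene
  have htriangle : ∀ i, ∀ e1 ∈ p.edges, ∀ e2 ∈ p.edges, e1 ∈ triangleEdges (tri i) →
      e2 ∈ triangleEdges (tri i) → e1 = e2 := by
    intro i e1 hp1 e2 hp2 ht1 ht2
    by_contra hne
    obtain ⟨hab, hbc, hac⟩ := htri i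
    simp only [triangleEdges, Finset.mem_insert, Finset.mem_singleton] at ht1 ht2
    rcases ht1 with rfl | rfl | rfl <;> rcases ht2 with rfl | rfl | rfl
    · exact hne rfl
    · exact no_two_adjacent_edges hc p hplen (G.ne_of_adj hac) hac
        (by rw [Sym2.eq_swap]; exact hp1) hp2
    · exact no_two_adjacent_edges hc p hplen (G.ne_of_adj hbc) hbc hp1 hp2
    · exact no_two_adjacent_edges hc p hplen (Ne.symm (G.ne_of_adj hac)) hac.symm hp1
        (by rw [Sym2.eq_swap]; exact hp2)
    · exact hne rfl
    · exact no_two_adjacent_edges hc p hplen (Ne.symm (G.ne_of_adj hab)) hab.symm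
        (by rw [Sym2.eq_swap]; exact hp1) (by rw [Sym2.eq_swap]; exact hp2)
    · exact no_two_adjacent_edges hc p hplen (Ne.symm (G.ne_of_adj hbc)) hbc.symm hp1 hp2
    · exact no_two_adjacent_edges hc p hplen (G.ne_of_adj hab) hab
        (by rw [Sym2.eq_swap]; exact hp1) (by rw [Sym2.eq_swap]; exact hp2)
    · exact hne rfl
  have huniq : ∀ e ∈ p.edges, c e = c e0 → e = e0 := by
    intro e hep hce
    by_contra hne
    obtain ⟨i, hi1, hi2⟩ := hkey e (p.edges_subset_edgeSet hep) e0
      (p.edges_subset_edgeSet he0) hne hce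
    exact hne (htriangle i e hep e0 he0 hi1 hi2)
  refine ⟨c e0, ?_⟩
  obtain ⟨l, hl⟩ : ∃ l, p.edges = e0 :: l := ⟨p.edges.tail, (List.cons_head_tail hene).symm⟩
  have hnotmem : c e0 ∉ l.map c := by
    intro hmem
    obtain ⟨e, hel, hce⟩ := List.mem_map.mp hmem
    have hep : e ∈ p.edges := by
      rw [hl]
      exact List.mem_cons_of_mem _ hel
    have heq : e = e0 := huniq e hep hce
    have hnodup := hpath.edges_nodup
    rw [hl] at hnodup
    exact (List.nodup_cons.mp hnodup).1 (heq ▸ hel)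
  rw [hl]
  simp only [List.map_cons, List.count_cons_self]
  rw [List.count_eq_zero.mpr hnotmem]
end

section
/- Let S_{m,t} be the graph obtained from the star S_m with m edges by adding t edges between 2t distinct leaves (forming t edge-disjoint triangles, 2t ≤ m). Then scfc(S_{m,t}) = m + t − 2t = (m+t) − 2t, i.e., equals the number of edges of S_{m,t} minus twice the number of triangles. -/
open SimpleGraph

/-- `S_{m,t}`: the star with center `0` and leaves `1, …, m`, together with the extra
edges joining leaf `2i+1` to leaf `2i+2` for `i < t`, forming `t` edge-disjoint triangles. -/
def starPlusTriangles (m t : ℕ) : SimpleGraph (Fin (m + 1)) :=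
  SimpleGraph.fromRel (fun u v =>
    u = 0 ∨ ∃ i : ℕ, i < t ∧ (u : ℕ) = 2 * i + 1 ∧ (v : ℕ) = 2 * i + 2)


lemma spt_adj_iff {m t : ℕ} (u v : Fin (m+1)) : (starPlusTriangles m t).Adj u v ↔
    u ≠ v ∧ (u = 0 ∨ v = 0 ∨ ∃ i, i < t ∧
      ((u : ℕ) = 2*i+1 ∧ (v : ℕ) = 2*i+2 ∨ (v : ℕ) = 2*i+1 ∧ (u : ℕ) = 2*i+2)) := by
  simp only [starPlusTriangles, fromRel_adj]
  constructor
  · rintro ⟨h, (h0 | ⟨i, hi, h1, h2⟩) | (h0 | ⟨i, hi, h1, h2⟩)⟩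
    · exact ⟨h, Or.inl h0⟩
    · exact ⟨h, Or.inr (Or.inr ⟨i, hi, Or.inl ⟨h1, h2⟩⟩)⟩
    · exact ⟨h, Or.inr (Or.inl h0)⟩
    · exact ⟨h, Or.inr (Or.inr ⟨i, hi, Or.inr ⟨h1, h2⟩⟩)⟩
  · rintro ⟨h, h0 | h0 | ⟨i, hi, ⟨h1, h2⟩ | ⟨h1, h2⟩⟩⟩
    · exact ⟨h, Or.inl (Or.inl h0)⟩
    · exact ⟨h, Or.inr (Or.inl h0)⟩
    · exact ⟨h, Or.inl (Or.inr ⟨i, hi, h1, h2⟩)⟩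
    · exact ⟨h, Or.inr (Or.inr ⟨i, hi, h1, h2⟩)⟩

lemma spt_adj_zero {m t : ℕ} (u : Fin (m+1)) (hu : u ≠ 0) : (starPlusTriangles m t).Adj u 0 := by
  rw [spt_adj_iff]; exact ⟨hu, Or.inr (Or.inl rfl)⟩

lemma fin_ne_iff {m : ℕ} {u v : Fin (m+1)} : u ≠ v ↔ (u : ℕ) ≠ (v : ℕ) := by
  simp [Fin.ext_iff]

lemma spt_middle {m t : ℕ} {u v w : Fin (m+1)} (hu : u ≠ 0) (hv : v ≠ 0) (huv : u ≠ v)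
    (h1 : (starPlusTriangles m t).Adj u w) (h2 : (starPlusTriangles m t).Adj w v) : w = 0 := by
  by_contra hw
  rw [spt_adj_iff] at h1 h2
  obtain ⟨hne1, h1⟩ := h1
  obtain ⟨hne2, h2⟩ := h2
  rcases h1 with h | h | ⟨i, hi, h⟩
  · exact hu h
  · exact hw h
  · rcases h2 with h' | h' | ⟨j, hj, h'⟩
    · exact hw h'
    · exact hv h'
    · rw [fin_ne_iff] at huv
      rcases h with ⟨a1, a2⟩ | ⟨a1, a2⟩ <;> rcases h' with ⟨b1, b2⟩ | ⟨b1, b2⟩ <;> omega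

lemma spt_dist_one {m t : ℕ} {u v : Fin (m+1)} (h : (starPlusTriangles m t).Adj u v) :
    (starPlusTriangles m t).dist u v = 1 := dist_eq_one_iff_adj.mpr h

lemma spt_dist_two {m t : ℕ} {u v : Fin (m+1)} (hu : u ≠ 0) (hv : v ≠ 0) (huv : u ≠ v)
    (hadj : ¬ (starPlusTriangles m t).Adj u v) : (starPlusTriangles m t).dist u v = 2 := by
  let p : (starPlusTriangles m t).Walk u v :=
    .cons (spt_adj_zero u hu) ((spt_adj_zero v hv).symm.toWalk)
  have hle := dist_le p
  have hlen : p.length = 2 := rfl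
  rw [hlen] at hle
  have hpos : 0 < (starPlusTriangles m t).dist u v :=
    Reachable.pos_dist_of_ne p.reachable huv
  have hne1 : (starPlusTriangles m t).dist u v ≠ 1 := fun h => hadj (dist_eq_one_iff_adj.mp h)
  omega


lemma spt_colors_ne {m t : ℕ} {c : Sym2 (Fin (m+1)) → ℕ}
    (hc : IsStrongCFCColoring (starPlusTriangles m t) c)
    {u v : Fin (m+1)} (hu : u ≠ 0) (hv : v ≠ 0) (huv : u ≠ v)
    (hadj : ¬ (starPlusTriangles m t).Adj u v) :
    c s(u, 0) ≠ c s(v, 0) := by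
  obtain ⟨p, hp, hlen, a, ha⟩ := hc u v huv
  rw [spt_dist_two hu hv huv hadj] at hlen
  cases p with
  | nil => simp at hlen
  | cons h q =>
    cases q with
    | nil => simp at hlen
    | cons h' q' =>
      cases q' with
      | cons h'' q'' => simp at hlen
      | nil =>
        have hw := spt_middle hu hv huv h h'
        subst hw
        simp only [Walk.edges_cons, Walk.edges_nil, List.map_cons, List.map_nil] at ha
        intro heq
        rw [show s(v, (0 : Fin (m+1))) = s(0, v) from Sym2.eq_swap] at heq
        rw [heq] at ha
        simp [List.count_cons] at ha
        split at ha <;> omega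

open Fin.NatCast in
lemma spt_lower {m t k : ℕ} (hm : 1 ≤ m) (ht : 2*t ≤ m) {c : Sym2 (Fin (m+1)) → ℕ}
    (hlt : ∀ e ∈ (starPlusTriangles m t).edgeSet, c e < k)
    (hc : IsStrongCFCColoring (starPlusTriangles m t) c) : m - t ≤ k := by
  classical
  set L : Finset ℕ := ((Finset.range t).image (fun i => 2*i+1)) ∪ Finset.Icc (2*t+1) m with hL
  have hmemL : ∀ j ∈ L, 1 ≤ j ∧ j ≤ m ∧ (j ≤ 2*t → j % 2 = 1) := by
    intro j hj
    rw [hL, Finset.mem_union] at hj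
    rcases hj with hj | hj
    · obtain ⟨i, hi, rfl⟩ := Finset.mem_image.mp hj
      rw [Finset.mem_range] at hi
      omega
    · rw [Finset.mem_Icc] at hj; omega
  have hcard : L.card = m - t := by
    rw [hL, Finset.card_union_of_disjoint, Finset.card_image_of_injective,
      Finset.card_range, Nat.card_Icc]
    · omega
    · intro a b hab; simp only [] at hab; omega
    · rw [Finset.disjoint_left]
      rintro x hx hx'
      obtain ⟨i, hi, rfl⟩ := Finset.mem_image.mp hx
      rw [Finset.mem_range] at hi
      rw [Finset.mem_Icc] at hx'
      omega
  have hval : ∀ j ∈ L, ((j : Fin (m+1)) : ℕ) = j := by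
    intro j hj
    exact Fin.val_cast_of_lt (by have := hmemL j hj; omega)
  rw [← hcard, ← Finset.card_range k]
  refine Finset.card_le_card_of_injOn (fun j => c s((j : Fin (m+1)), 0)) ?_ ?_
  · intro j hj
    rw [Finset.mem_coe, Finset.mem_range]
    apply hlt
    rw [SimpleGraph.mem_edgeSet]
    apply spt_adj_zero
    rw [fin_ne_iff, hval j hj]
    have := hmemL j hj
    simp; omega
  · intro j hj j' hj' hne
    by_contra hjj
    have h1 := hmemL j hj
    have h2 := hmemL j' hj'
    have hj0 : (j : Fin (m+1)) ≠ 0 := by rw [fin_ne_iff, hval j hj]; simp; omega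
    have hj'0 : (j' : Fin (m+1)) ≠ 0 := by rw [fin_ne_iff, hval j' hj']; simp; omega
    have hne2 : (j : Fin (m+1)) ≠ (j' : Fin (m+1)) := by
      rw [fin_ne_iff, hval j hj, hval j' hj']; omega
    have hnadj : ¬ (starPlusTriangles m t).Adj (j : Fin (m+1)) (j' : Fin (m+1)) := by
      rw [spt_adj_iff]
      rintro ⟨-, h | h | ⟨i, hi, h⟩⟩
      · exact hj0 h
      · exact hj'0 h
      · rw [hval j hj, hval j' hj'] at h
        rcases h with ⟨a1, a2⟩ | ⟨a1, a2⟩ <;> omega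
    exact spt_colors_ne hc hj0 hj'0 hne2 hnadj hne

/-- color of the star edge to leaf `j` -/
def sptCol (m t j : ℕ) : ℕ := if j ≤ 2*t then (m - 2*t) + (j-1)/2 else j - 2*t - 1

def sptColoring (m t : ℕ) : Sym2 (Fin (m+1)) → ℕ :=
  Sym2.lift ⟨fun a b => if a = 0 then sptCol m t b else if b = 0 then sptCol m t a else 0,
    by
      intro a b
      by_cases ha : a = 0 <;> by_cases hb : b = 0 <;> simp [ha, hb]⟩

lemma sptColoring_mk {m t : ℕ} (a b : Fin (m+1)) :
    sptColoring m t s(a, b) =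
      if a = 0 then sptCol m t b else if b = 0 then sptCol m t a else 0 := by
  simp [sptColoring]

lemma sptCol_lt {m t : ℕ} (hm : 1 ≤ m) (ht : 2*t ≤ m) {j : ℕ} (h1 : 1 ≤ j) (h2 : j ≤ m) :
    sptCol m t j < m - t := by
  unfold sptCol
  split <;> omega

lemma sptCol_ne {m t : ℕ} (ht : 2*t ≤ m) {a b : ℕ} (ha1 : 1 ≤ a) (ha2 : a ≤ m)
    (hb1 : 1 ≤ b) (hb2 : b ≤ m) (hab : a ≠ b)
    (hn : ∀ i, ¬(i < t ∧ ((a = 2*i+1 ∧ b = 2*i+2) ∨ (b = 2*i+1 ∧ a = 2*i+2)))) :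
    sptCol m t a ≠ sptCol m t b := by
  have h := hn ((a-1)/2)
  unfold sptCol
  split <;> split <;> omega

lemma spt_upper (m t : ℕ) (hm : 1 ≤ m) (ht : 2*t ≤ m) :
    (∀ e ∈ (starPlusTriangles m t).edgeSet, sptColoring m t e < m - t) ∧
    IsStrongCFCColoring (starPlusTriangles m t) (sptColoring m t) := by
  constructor
  · intro e
    induction e using Sym2.ind with
    | _ a b =>
      rw [SimpleGraph.mem_edgeSet, spt_adj_iff, sptColoring_mk]
      rintro ⟨hab, h⟩
      have hav : (a : ℕ) < m + 1 := a.isLt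
      have hbv : (b : ℕ) < m + 1 := b.isLt
      split
      · rename_i h0
        have : (b : ℕ) ≠ 0 := by
          rw [fin_ne_iff] at hab; subst h0; simpa using hab.symm
        exact sptCol_lt hm ht (by omega) (by omega)
      · split
        · rename_i h0 h0'
          have : (a : ℕ) ≠ 0 := fun h => h0 (Fin.ext h)
          exact sptCol_lt hm ht (by omega) (by omega)
        · omega
  · intro u v huv
    by_cases hadj : (starPlusTriangles m t).Adj u v
    · refine ⟨hadj.toWalk, ?_, ?_, sptColoring m t s(u, v), ?_⟩
      · simp [Walk.isPath_def, huv]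
      · simp [spt_dist_one hadj]
      · simp
    · have hu : u ≠ 0 := by
        rintro rfl
        exact hadj ((spt_adj_zero v (Ne.symm huv)).symm)
      have hv : v ≠ 0 := by
        rintro rfl
        exact hadj (spt_adj_zero u huv)
      refine ⟨.cons (spt_adj_zero u hu) ((spt_adj_zero v hv).symm.toWalk), ?_, ?_,
        sptColoring m t s(u, (0 : Fin (m+1))), ?_⟩
      · simp [Walk.isPath_def, hu, hv, huv, Ne.symm hv]
      · simp [spt_dist_two hu hv huv hadj]
      · have hcu : sptColoring m t s(u, (0 : Fin (m+1))) = sptCol m t u := by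
          rw [sptColoring_mk]; simp [hu]
        have hcv : sptColoring m t s((0 : Fin (m+1)), v) = sptCol m t v := by
          rw [sptColoring_mk]; simp
        have hune : (u : ℕ) ≠ 0 := fun h => hu (Fin.ext h)
        have hvne : (v : ℕ) ≠ 0 := fun h => hv (Fin.ext h)
        have hne : sptCol m t u ≠ sptCol m t v := by
          apply sptCol_ne ht (by omega) (by omega) (by omega) (by omega)
            (by rw [fin_ne_iff] at huv; omega)
          intro i hi
          apply hadj
          rw [spt_adj_iff]
          exact ⟨huv, Or.inr (Or.inr ⟨i, hi.1, hi.2⟩)⟩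
        simp only [Walk.edges_cons, Walk.edges_nil, List.map_cons, List.map_nil,
          List.count_cons, List.count_nil, hcu, hcv]
        simp [hne, hne.symm]

theorem scfc_starPlusTriangles (m t : ℕ) (hm : 1 ≤ m) (ht : 2 * t ≤ m) :
    scfc (starPlusTriangles m t) = (m + t) - 2 * t := by
  have h1 : (m + t) - 2 * t = m - t := by omega
  rw [h1]
  unfold scfc
  have hmem : m - t ∈ {k | ∃ c : Sym2 (Fin (m+1)) → ℕ,
      (∀ e ∈ (starPlusTriangles m t).edgeSet, c e < k) ∧
      IsStrongCFCColoring (starPlusTriangles m t) c} :=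
    ⟨sptColoring m t, (spt_upper m t hm ht).1, (spt_upper m t hm ht).2⟩
  refine le_antisymm (Nat.sInf_le hmem) (le_csInf ⟨m - t, hmem⟩ ?_)
  rintro k ⟨c, hlt, hc⟩
  exact spt_lower hm ht hlt hc
end

section
/- Let G be a connected graph of size m with scfc(G) = m − k. Then diam(G) − ⌈log₂(diam(G)+1)⌉ ≤ k. -/
open SimpleGraph

lemma count_map_eq_one' {α β : Type*} [DecidableEq β] {l : List α} (f : α → β) {x : α}
    (hx : x ∈ l) (hnd : l.Nodup) (h : ∀ y ∈ l, f y = f x → y = x) :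
    (l.map f).count (f x) = 1 := by
  obtain ⟨l₁, l₂, rfl⟩ := List.append_of_mem hx
  rw [List.nodup_append] at hnd
  have hx1 : x ∉ l₁ := fun hm => hnd.2.2 x hm x List.mem_cons_self rfl
  have hx2 : x ∉ l₂ := fun hm => (List.nodup_cons.mp hnd.2.1).1 hm
  have c1 : (l₁.map f).count (f x) = 0 := by
    rw [List.count_eq_zero, List.mem_map]
    rintro ⟨y, hy, hfy⟩
    exact hx1 (h y (by simp [hy]) hfy ▸ hy)
  have c2 : (l₂.map f).count (f x) = 0 := by
    rw [List.count_eq_zero, List.mem_map]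
    rintro ⟨y, hy, hfy⟩
    exact hx2 (h y (by simp [hy]) hfy ▸ hy)
  simp [List.count_append, List.count_cons, c1, c2]

lemma ruler_unique' (a L : ℕ) (hL : 0 < L) :
    ∃ x, a + 1 ≤ x ∧ x ≤ a + L ∧
      ∀ y, a + 1 ≤ y → y ≤ a + L → padicValNat 2 y = padicValNat 2 x → y = x := by
  haveI : Fact (Nat.Prime 2) := ⟨Nat.prime_two⟩
  obtain ⟨x, hx, hmax⟩ := (Finset.Icc (a+1) (a+L)).exists_max_image (padicValNat 2)
    ⟨a+1, Finset.mem_Icc.mpr ⟨le_refl _, by omega⟩⟩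
  rw [Finset.mem_Icc] at hx
  refine ⟨x, hx.1, hx.2, ?_⟩
  have key : ∀ z w : ℕ, a + 1 ≤ z → w ≤ a + L → z < w →
      padicValNat 2 z = padicValNat 2 x → padicValNat 2 w = padicValNat 2 x → False := by
    intro z w hz hw hzw h1 h2
    set T := padicValNat 2 x with hT
    have hz0 : z ≠ 0 := by omega
    have hdz : 2 ^ T ∣ z := h1 ▸ pow_padicValNat_dvd
    have hdw : 2 ^ T ∣ w := h2 ▸ pow_padicValNat_dvd
    have hdiff : 2 ^ T ∣ w - z := Nat.dvd_sub hdw hdz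
    have hpow : 0 < 2 ^ T := Nat.pow_pos (by norm_num)
    have hzw2 : z + 2 ^ T ≤ w := by
      have := Nat.le_of_dvd (by omega) hdiff; omega
    have hnd2 : ¬ 2 ^ (T+1) ∣ z := by
      rw [← h1]; exact pow_succ_padicValNat_not_dvd hz0
    have h2T : 2 ^ (T + 1) ∣ z + 2 ^ T := by
      obtain ⟨u, hu⟩ := hdz
      rcases Nat.even_or_odd u with he | ho
      · exact absurd (by obtain ⟨r, hr⟩ := he; exact ⟨r, by rw [hu, hr]; ring⟩) hnd2
      · obtain ⟨r, hr⟩ := ho; exact ⟨r + 1, by rw [hu, hr]; ring⟩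
    have hle : T + 1 ≤ padicValNat 2 (z + 2 ^ T) :=
      (padicValNat_dvd_iff_le (by omega)).mp h2T
    have hmem : z + 2 ^ T ∈ Finset.Icc (a+1) (a+L) := Finset.mem_Icc.mpr ⟨by omega, by omega⟩
    have := hmax _ hmem
    omega
  intro y hy1 hy2 hys
  by_contra hne
  rcases lt_or_gt_of_ne hne with h | h
  · exact key y x hy1 hx.2 h hys rfl
  · exact key x y hx.1 hy2 h rfl hys

lemma walk_decomp' {V : Type*} [DecidableEq V] {G : SimpleGraph V} {x y u v : V} (p : G.Walk x y)
    (hu : u ∈ p.support) (hv : v ∈ p.support) :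
    (∃ (w₁ : G.Walk x u) (q : G.Walk u v) (w₂ : G.Walk v y), p = (w₁.append q).append w₂) ∨
    (∃ (w₁ : G.Walk x v) (q : G.Walk v u) (w₂ : G.Walk u y), p = (w₁.append q).append w₂) := by
  have hts := p.take_spec hu
  rw [← hts, Walk.mem_support_append_iff] at hv
  rcases hv with hv | hv
  · right
    have h2 := (p.takeUntil u hu).take_spec hv
    refine ⟨(p.takeUntil u hu).takeUntil v hv, (p.takeUntil u hu).dropUntil v hv,
      p.dropUntil u hu, ?_⟩
    conv_lhs => rw [← hts, ← h2]
  · left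
    have h2 := (p.dropUntil u hu).take_spec hv
    refine ⟨p.takeUntil u hu, (p.dropUntil u hu).takeUntil v hv,
      (p.dropUntil u hu).dropUntil v hv, ?_⟩
    conv_lhs => rw [← hts, ← h2]
    rw [Walk.append_assoc]

lemma segment_props' {V : Type*} {G : SimpleGraph V} (hconn : G.Connected) {x y u v : V}
    {p : G.Walk x y} (hp : p.IsPath) (hlen : p.length = G.dist x y)
    (w₁ : G.Walk x u) (q : G.Walk u v) (w₂ : G.Walk v y)
    (hdec : p = (w₁.append q).append w₂) :
    q.IsPath ∧ q.length = G.dist u v ∧ p.edges = w₁.edges ++ (q.edges ++ w₂.edges) := by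
  subst hdec
  refine ⟨(hp.of_append_left).of_append_right, ?_, by simp [Walk.edges_append]⟩
  have h1 : G.dist x u ≤ w₁.length := dist_le w₁
  have h3 : G.dist u v ≤ q.length := dist_le q
  have h2 : G.dist v y ≤ w₂.length := dist_le w₂
  have htri1 : G.dist x y ≤ G.dist x v + G.dist v y := hconn.dist_triangle
  have htri2 : G.dist x v ≤ G.dist x u + G.dist u v := hconn.dist_triangle
  have hsum : ((w₁.append q).append w₂).length = w₁.length + q.length + w₂.length := by
    simp [Walk.length_append]
  rw [hsum] at hlen
  omega

theorem diam_sub_clog_le {V : Type*} [Fintype V] [DecidableEq V]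
    (G : SimpleGraph V) [DecidableRel G.Adj] (hc : G.Connected) (k : ℕ)
    (hk : k ≤ G.edgeFinset.card) (hscfc : scfc G = G.edgeFinset.card - k) :
    G.diam - Nat.clog 2 (G.diam + 1) ≤ k := by
  classical
  by_cases hd0 : G.diam = 0
  · simp [hd0]
  have hV : Nonempty V := hc.nonempty
  obtain ⟨x, y, hxy⟩ := exists_dist_eq_diam (G := G)
  obtain ⟨p, hp, hpd⟩ := hc.exists_path_of_dist x y
  set d := G.diam with hd
  set m := G.edgeFinset.card with hm
  set CL := Nat.clog 2 (d + 1) with hCL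
  have hplen : p.length = d := by rw [hpd, hxy]
  have hnd : p.edges.Nodup := hp.isTrail.edges_nodup
  have hElen : p.edges.length = d := by rw [Walk.length_edges, hplen]
  have hsub : p.edges.toFinset ⊆ G.edgeFinset := by
    intro e he
    rw [List.mem_toFinset] at he
    exact mem_edgeFinset.mpr (p.edges_subset_edgeSet he)
  have hPEcard : p.edges.toFinset.card = d := by
    rw [List.toFinset_card_of_nodup hnd, hElen]
  have hdm : d ≤ m := hPEcard ▸ Finset.card_le_card hsub
  set S := G.edgeFinset \ p.edges.toFinset with hS
  have hScard : S.card = m - d := by rw [hS, Finset.card_sdiff_of_subset hsub, hPEcard]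
  set c : Sym2 V → ℕ := fun e =>
    if e ∈ p.edges then padicValNat 2 (p.edges.idxOf e + 1)
    else CL + S.toList.idxOf e with hcdef
  have hlog : Nat.log 2 d < CL := by
    rw [hCL, Nat.lt_clog_iff_pow_lt one_lt_two]
    have := Nat.pow_log_le_self 2 hd0
    omega
  have hcP : ∀ e ∈ p.edges, c e = padicValNat 2 (p.edges.idxOf e + 1) ∧ c e < CL := by
    intro e he
    have h0 : c e = padicValNat 2 (p.edges.idxOf e + 1) := by
      rw [hcdef]; simp [he]
    refine ⟨h0, ?_⟩
    have h1 := padicValNat_le_nat_log (p := 2) (p.edges.idxOf e + 1)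
    have h2 : p.edges.idxOf e + 1 ≤ d := by
      have := List.idxOf_lt_length_iff.mpr he
      omega
    have h3 : Nat.log 2 (p.edges.idxOf e + 1) ≤ Nat.log 2 d := Nat.log_mono_right h2
    omega
  have hSmem : ∀ e, e ∈ G.edgeSet → e ∉ p.edges → e ∈ S.toList := by
    intro e heG heP
    rw [Finset.mem_toList, hS, Finset.mem_sdiff, List.mem_toFinset]
    exact ⟨mem_edgeFinset.mpr heG, heP⟩
  have hcS : ∀ e, e ∈ G.edgeSet → e ∉ p.edges →
      c e = CL + S.toList.idxOf e ∧ CL ≤ c e ∧ c e < CL + (m - d) := by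
    intro e heG heP
    have h0 : c e = CL + S.toList.idxOf e := by rw [hcdef]; simp [heP]
    have h1 : S.toList.idxOf e < S.toList.length :=
      List.idxOf_lt_length_iff.mpr (hSmem e heG heP)
    have h2 : S.toList.length = m - d := by rw [Finset.length_toList, hScard]
    exact ⟨h0, by omega, by omega⟩
  -- key for pairs of vertices on the diameter path
  have key1 : ∀ (u v : V) (w₁ : G.Walk x u) (q : G.Walk u v) (w₂ : G.Walk v y), u ≠ v →
      p = (w₁.append q).append w₂ →
      q.IsPath ∧ q.length = G.dist u v ∧ ∃ a, (q.edges.map c).count a = 1 := by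
    intro u v w₁ q w₂ hne hdec
    obtain ⟨hqp, hql, hedges⟩ := segment_props' hc hp hpd w₁ q w₂ hdec
    set a0 := w₁.length with ha0
    have ha0e : w₁.edges.length = a0 := w₁.length_edges
    have hLpos : 0 < q.length := by rw [hql]; exact hc.pos_dist_of_ne hne
    have hqe : q.edges.length = q.length := q.length_edges
    have hQdt : (p.edges.drop a0).take q.edges.length = q.edges := by
      rw [hedges, ← ha0e, List.drop_left, List.take_left]
    have hplE : p.edges.length = a0 + q.edges.length + w₂.edges.length := by
      rw [hedges]; simp [ha0e]; omega
    have hgetq : ∀ t (ht : t < q.edges.length),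
        q.edges[t]'ht = p.edges[a0 + t]'(by omega) := by
      intro t ht
      rw [List.getElem_of_eq hQdt.symm ht, List.getElem_take, List.getElem_drop]
    have hidx : ∀ t (ht : t < q.edges.length),
        p.edges.idxOf (q.edges[t]'ht) = a0 + t := by
      intro t ht
      have hlt : a0 + t < p.edges.length := by omega
      have hmemp : q.edges[t]'ht ∈ p.edges := by
        rw [hgetq t ht]; exact List.getElem_mem _
      have hlt2 : p.edges.idxOf (q.edges[t]'ht) < p.edges.length :=
        List.idxOf_lt_length_iff.mpr hmemp
      have e1 : p.edges[p.edges.idxOf (q.edges[t]'ht)]'hlt2 = q.edges[t]'ht :=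
        List.getElem_idxOf hlt2
      have e2 : p.edges[p.edges.idxOf (q.edges[t]'ht)]'hlt2 = p.edges[a0+t]'hlt := by
        rw [e1, hgetq t ht]
      exact (hnd.getElem_inj_iff).mp e2
    obtain ⟨x₀, hx₀1, hx₀2, hx₀u⟩ := ruler_unique' a0 q.length hLpos
    have ht₀ : x₀ - 1 - a0 < q.edges.length := by omega
    have he₀m : q.edges[x₀ - 1 - a0]'ht₀ ∈ q.edges := List.getElem_mem _
    have hmemP : ∀ e' ∈ q.edges, e' ∈ p.edges := by
      intro e' he'
      rw [hedges]
      exact List.mem_append_right _ (List.mem_append_left _ he')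
    have hce₀ : c (q.edges[x₀ - 1 - a0]'ht₀) = padicValNat 2 x₀ := by
      rw [(hcP _ (hmemP _ he₀m)).1, hidx _ ht₀]
      congr 1
      omega
    refine ⟨hqp, hql, c (q.edges[x₀ - 1 - a0]'ht₀), ?_⟩
    refine count_map_eq_one' c he₀m hqp.isTrail.edges_nodup ?_
    intro e' he' hcc
    obtain ⟨t, ht, rfl⟩ := List.mem_iff_getElem.mp he'
    have hc2 : c (q.edges[t]'ht) = padicValNat 2 (a0 + t + 1) := by
      rw [(hcP _ (hmemP _ (List.getElem_mem ht))).1, hidx t ht]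
    have heq : a0 + t + 1 = x₀ := by
      refine hx₀u (a0 + t + 1) (by omega) (by omega) ?_
      rw [← hc2, hcc, hce₀]
    have : t = x₀ - 1 - a0 := by omega
    simp only [this]
  -- key for pairs where the first vertex is off the diameter path
  have key2 : ∀ u v : V, u ≠ v → u ∉ p.support →
      ∃ w : G.Walk u v, w.IsPath ∧ w.length = G.dist u v ∧
        ∃ a, (w.edges.map c).count a = 1 := by
    intro u v hne hu
    obtain ⟨w, hw, hwlen⟩ := hc.exists_path_of_dist u v
    cases w with
    | nil => exact absurd rfl hne
    | cons hadj w' =>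
      rename_i b
      have he₀edges : s(u, b) ∈ (Walk.cons hadj w').edges := by
        rw [Walk.edges_cons]; exact List.mem_cons_self
      have he₀P : s(u, b) ∉ p.edges := fun hmem => hu (p.fst_mem_support_of_mem_edges hmem)
      have he₀G : s(u, b) ∈ G.edgeSet := G.mem_edgeSet.mpr hadj
      refine ⟨Walk.cons hadj w', hw, hwlen, c s(u, b), ?_⟩
      refine count_map_eq_one' c he₀edges hw.isTrail.edges_nodup ?_
      intro e' he' hcc
      have he'G : e' ∈ G.edgeSet := (Walk.cons hadj w').edges_subset_edgeSet he'
      by_cases hP : e' ∈ p.edges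
      · exfalso
        have h1 := (hcP e' hP).2
        have h2 := (hcS s(u, b) he₀G he₀P).2.1
        omega
      · have h1 := (hcS e' he'G hP).1
        have h2 := (hcS s(u, b) he₀G he₀P).1
        rw [h1, h2] at hcc
        have := Nat.add_left_cancel hcc
        exact (List.idxOf_inj (hSmem e' he'G hP)).mp this
  -- the coloring witnesses the bound
  have hmemset : (m - d + CL) ∈
      {n | ∃ c : Sym2 V → ℕ, (∀ e ∈ G.edgeSet, c e < n) ∧ IsStrongCFCColoring G c} := by
    refine ⟨c, ?_, ?_⟩
    · intro e heG
      by_cases heP : e ∈ p.edges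
      · have := (hcP e heP).2; omega
      · have := (hcS e heG heP).2.2; omega
    · intro u v hne
      by_cases hu : u ∈ p.support
      · by_cases hv : v ∈ p.support
        · rcases walk_decomp' p hu hv with ⟨w₁, q, w₂, hdec⟩ | ⟨w₁, q, w₂, hdec⟩
          · obtain ⟨hqp, hql, a, hcount⟩ := key1 u v w₁ q w₂ hne hdec
            exact ⟨q, hqp, hql, a, hcount⟩
          · obtain ⟨hqp, hql, a, hcount⟩ := key1 v u w₁ q w₂ hne.symm hdec
            refine ⟨q.reverse, hqp.reverse, ?_, a, ?_⟩
            · rw [Walk.length_reverse, hql, G.dist_comm]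
            · rw [Walk.edges_reverse, List.map_reverse, List.count_reverse]
              exact hcount
        · obtain ⟨w, hwp, hwl, a, hcount⟩ := key2 v u hne.symm hv
          refine ⟨w.reverse, hwp.reverse, ?_, a, ?_⟩
          · rw [Walk.length_reverse, hwl, G.dist_comm]
          · rw [Walk.edges_reverse, List.map_reverse, List.count_reverse]
            exact hcount
      · obtain ⟨w, hwp, hwl, a, hcount⟩ := key2 u v hne hu
        exact ⟨w, hwp, hwl, a, hcount⟩
  have hle : scfc G ≤ m - d + CL := Nat.sInf_le hmemset
  rw [hscfc] at hle
  omega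
end
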